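/- arXiv:1711.06963 — 8 statements merged into one kernel-verified Lean document; each statement's English description precedes it below -/
import Mathlib

section
/- Let P be a (J⁺,J⁻) sign-pattern polyhedron in ℝⁿ defined by rational data, and let P^I := conv(P ∩ ℤⁿ). Then P^I can be written as the set of x ∈ ℝⁿ_+ satisfying finitely many inequalities Σ_{j∈[n]} a_j x_j ≤ β each of which has the same sign pattern, i.e., a_j ≥ 0 for all j ∈ J⁺ and a_j ≤ 0 for all j ∈ J⁻ in every such inequality. -/
/-- A finitely-constrained linear inequality set. -/
def IsPolySet {α : Type} [Fintype α] (X : Set (α → ℝ)) : Prop :=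
  ∃ (k : ℕ) (c : Fin k → α → ℝ) (d : Fin k → ℝ),
    X = {x | ∀ i, ∑ j, c i j * x j ≤ d i}

lemma isPolySet_of_index {α : Type} [Fintype α] {ι : Type} [Fintype ι]
    (c : ι → α → ℝ) (d : ι → ℝ) :
    IsPolySet {x : α → ℝ | ∀ i, ∑ j, c i j * x j ≤ d i} := by
  classical
  refine ⟨Fintype.card ι, fun i' => c ((Fintype.equivFin ι).symm i'),
    fun i' => d ((Fintype.equivFin ι).symm i'), ?_⟩
  ext x
  constructor
  · intro h i'
    exact h _
  · intro h i
    simpa using h (Fintype.equivFin ι i)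

lemma IsPolySet.reindex {α γ : Type} [Fintype α] [Fintype γ] (e : γ ≃ α)
    {X : Set (α → ℝ)} (h : IsPolySet X) :
    IsPolySet {x : γ → ℝ | (x ∘ e.symm) ∈ X} := by
  obtain ⟨k, c, d, rfl⟩ := h
  refine ⟨k, fun i j => c i (e j), d, ?_⟩
  ext x
  simp only [Set.mem_setOf_eq, Function.comp]
  constructor
  · intro h i
    have := h i
    rw [← Equiv.sum_comp e (fun j => c i j * x (e.symm j))] at this
    simpa using this
  · intro h i
    rw [← Equiv.sum_comp e (fun j => c i j * x (e.symm j))]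
    simpa using h i

lemma isPolySet_elim {α : Type} [Fintype α] {X : Set ((α ⊕ Fin 1) → ℝ)}
    (h : IsPolySet X) :
    IsPolySet {y : α → ℝ | ∃ t : ℝ, Sum.elim y (fun _ => t) ∈ X} := by
  classical
  obtain ⟨k, c, d, rfl⟩ := h
  set S : Fin k → (α → ℝ) → ℝ := fun i y => ∑ j : α, c i (Sum.inl j) * y j with hS
  set g : Fin k → ℝ := fun i => c i (Sum.inr 0) with hg
  have key : ∀ (y : α → ℝ) (t : ℝ) (i : Fin k),
      ∑ j : α ⊕ Fin 1, c i j * (Sum.elim y (fun _ => t)) j = S i y + g i * t := by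
    intro y t i
    rw [Fintype.sum_sum_type]
    simp [hS, hg, Fin.sum_univ_one]
  -- the new system
  have main : {y : α → ℝ | ∃ t : ℝ, ∀ i, S i y + g i * t ≤ d i} =
      {y : α → ℝ | ∀ p : ({i : Fin k // g i = 0} ⊕ ({i : Fin k // 0 < g i} × {i : Fin k // g i < 0})),
        (Sum.elim (fun q => S q.1 y) (fun q => g q.1.1 * S q.2.1 y + (-g q.2.1) * S q.1.1 y) p)
          ≤ (Sum.elim (fun q => d q.1) (fun q => g q.1.1 * d q.2.1 + (-g q.2.1) * d q.1.1) p)} := by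
    ext y
    simp only [Set.mem_setOf_eq]
    constructor
    · rintro ⟨t, ht⟩ p
      rcases p with ⟨i, hi⟩ | ⟨⟨i, hi⟩, ⟨i', hi'⟩⟩
      · have := ht i
        simpa [hi] using this
      · have h1 := ht i
        have h2 := ht i'
        simp only [Sum.elim_inr]
        nlinarith [mul_le_mul_of_nonneg_left h2 (le_of_lt hi),
          mul_le_mul_of_nonneg_left h1 (by linarith : (0:ℝ) ≤ -g i')]
    · intro hp
      set Pos : Finset (Fin k) := Finset.univ.filter (fun i => 0 < g i) with hPos
      set Neg : Finset (Fin k) := Finset.univ.filter (fun i => g i < 0) with hNeg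
      by_cases hP : Pos.Nonempty
      · -- choose t as min of upper bounds
        set t := Pos.inf' hP (fun i => (d i - S i y) / g i) with hT
        obtain ⟨i₀, hi₀mem, hi₀⟩ := Finset.exists_mem_eq_inf' hP (fun i => (d i - S i y) / g i)
        have hi₀pos : 0 < g i₀ := (Finset.mem_filter.1 hi₀mem).2
        refine ⟨t, fun i => ?_⟩
        rcases lt_trichotomy (g i) 0 with hneg | hzero | hpos
        · -- need t ≥ lower bound
          have hpair := hp (Sum.inr ⟨⟨i₀, hi₀pos⟩, ⟨i, hneg⟩⟩)
          simp only [Sum.elim_inr] at hpair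
          -- from hpair : g i₀ * S i y + (-g i) * S i₀ y ≤ g i₀ * d i + (-g i) * d i₀
          -- t = (d i₀ - S i₀ y)/ g i₀ ; need S i y + g i * t ≤ d i
          have ht' : t = (d i₀ - S i₀ y) / g i₀ := by rw [hT, hi₀]
          rw [ht']
          refine le_of_mul_le_mul_left ?_ hi₀pos
          have hne : g i₀ ≠ 0 := ne_of_gt hi₀pos
          have expand : g i₀ * (S i y + g i * ((d i₀ - S i₀ y) / g i₀)) =
              g i₀ * S i y + g i * (d i₀ - S i₀ y) := by
            field_simp
          rw [expand]
          nlinarith [hpair]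
        · have := hp (Sum.inl ⟨i, hzero⟩)
          simpa [hzero] using this
        · -- t ≤ (d i - S i y)/g i
          have hmem : i ∈ Pos := Finset.mem_filter.2 ⟨Finset.mem_univ _, hpos⟩
          have hle : t ≤ (d i - S i y) / g i := by
            rw [hT]; exact Finset.inf'_le _ hmem
          have := mul_le_mul_of_nonneg_left hle (le_of_lt hpos)
          rw [mul_div_cancel₀ _ (ne_of_gt hpos)] at this
          linarith
      · -- no upper bounds
        by_cases hN : Neg.Nonempty
        · set t := Neg.sup' hN (fun i => (d i - S i y) / g i) with hT
          refine ⟨t, fun i => ?_⟩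
          rcases lt_trichotomy (g i) 0 with hneg | hzero | hpos
          · have hmem : i ∈ Neg := Finset.mem_filter.2 ⟨Finset.mem_univ _, hneg⟩
            have hle : (d i - S i y) / g i ≤ t := by
              rw [hT]; exact Finset.le_sup' (fun i => (d i - S i y) / g i) hmem
            have := mul_le_mul_of_nonpos_left hle (le_of_lt hneg)
            rw [mul_div_cancel₀ _ (ne_of_lt hneg)] at this
            linarith
          · have := hp (Sum.inl ⟨i, hzero⟩)
            simpa [hzero] using this
          · exact absurd (Finset.mem_filter.2 ⟨Finset.mem_univ _, hpos⟩ : i ∈ Pos)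
              (fun hmem => hP ⟨i, hmem⟩)
        · refine ⟨0, fun i => ?_⟩
          rcases lt_trichotomy (g i) 0 with hneg | hzero | hpos
          · exact absurd (Finset.mem_filter.2 ⟨Finset.mem_univ _, hneg⟩ : i ∈ Neg)
              (fun hmem => hN ⟨i, hmem⟩)
          · have := hp (Sum.inl ⟨i, hzero⟩)
            simpa [hzero] using this
          · exact absurd (Finset.mem_filter.2 ⟨Finset.mem_univ _, hpos⟩ : i ∈ Pos)
              (fun hmem => hP ⟨i, hmem⟩)
  have : {y : α → ℝ | ∃ t : ℝ, Sum.elim y (fun _ => t) ∈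
      {x : (α ⊕ Fin 1) → ℝ | ∀ i, ∑ j, c i j * x j ≤ d i}} =
      {y : α → ℝ | ∃ t : ℝ, ∀ i, S i y + g i * t ≤ d i} := by
    ext y
    simp only [Set.mem_setOf_eq]
    constructor
    · rintro ⟨t, ht⟩; exact ⟨t, fun i => by rw [← key y t i]; exact ht i⟩
    · rintro ⟨t, ht⟩; exact ⟨t, fun i => by rw [key y t i]; exact ht i⟩
  rw [this, main]
  set c' : ({i : Fin k // g i = 0} ⊕ ({i : Fin k // 0 < g i} × {i : Fin k // g i < 0})) → α → ℝ :=
    fun p j => Sum.elim (fun q => c q.1 (Sum.inl j))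
      (fun q => g q.1.1 * c q.2.1 (Sum.inl j) + (-g q.2.1) * c q.1.1 (Sum.inl j)) p with hc'
  set d' : ({i : Fin k // g i = 0} ⊕ ({i : Fin k // 0 < g i} × {i : Fin k // g i < 0})) → ℝ :=
    Sum.elim (fun q => d q.1) (fun q => g q.1.1 * d q.2.1 + (-g q.2.1) * d q.1.1) with hd'
  have hrw : ∀ (y : α → ℝ) p, (Sum.elim (fun q => S q.1 y)
      (fun q => g q.1.1 * S q.2.1 y + (-g q.2.1) * S q.1.1 y) p) = ∑ j, c' p j * y j := by
    rintro y (⟨i, hi⟩ | ⟨⟨i, hi⟩, ⟨i', hi'⟩⟩) <;>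
      simp [hc', hS, Finset.mul_sum, Finset.sum_add_distrib, mul_assoc, add_mul]
  have : {y : α → ℝ | ∀ p, (Sum.elim (fun q => S q.1 y)
      (fun q => g q.1.1 * S q.2.1 y + (-g q.2.1) * S q.1.1 y) p) ≤ d' p} =
      {y : α → ℝ | ∀ p, ∑ j, c' p j * y j ≤ d' p} := by
    ext y
    simp only [Set.mem_setOf_eq]
    exact forall_congr' (fun p => by rw [hrw y p])
  rw [this]
  exact isPolySet_of_index c' d'
open scoped Pointwise

lemma isPolySet_proj {α : Type} [Fintype α] :
    ∀ (N : ℕ) (X : Set ((α ⊕ Fin N) → ℝ)), IsPolySet X →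
      IsPolySet {y : α → ℝ | ∃ w : Fin N → ℝ, Sum.elim y w ∈ X} := by
  intro N
  induction N with
  | zero =>
    intro X hX
    have h1 := hX.reindex (Equiv.sumEmpty α (Fin 0)).symm
    convert h1 using 1
    ext y
    simp only [Set.mem_setOf_eq]
    constructor
    · rintro ⟨w, hw⟩
      convert hw using 2
      funext j
      rcases j with a | z
      · simp [Equiv.sumEmpty]
      · exact absurd z.2 (by omega)
    · intro h
      refine ⟨Fin.elim0, ?_⟩
      convert h using 2
      funext j
      rcases j with a | z
      · simp [Equiv.sumEmpty]
      · exact absurd z.2 (by omega)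
  | succ N ih =>
    intro X hX
    set e : ((α ⊕ Fin N) ⊕ Fin 1) ≃ (α ⊕ Fin (N + 1)) :=
      (Equiv.sumAssoc α (Fin N) (Fin 1)).trans
        ((Equiv.refl α).sumCongr finSumFinEquiv) with he
    have hX' : IsPolySet {z : ((α ⊕ Fin N) ⊕ Fin 1) → ℝ | (z ∘ e.symm) ∈ X} := hX.reindex e
    have hY := isPolySet_elim hX'
    have hZ := ih _ hY
    convert hZ using 1
    ext y
    simp only [Set.mem_setOf_eq]
    constructor
    · rintro ⟨w, hw⟩
      refine ⟨fun j => w (finSumFinEquiv (Sum.inl j)), w (finSumFinEquiv (Sum.inr 0)), ?_⟩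
      convert hw using 2
      funext j
      rcases j with a | z
      · simp [he, Equiv.sumAssoc, Equiv.sumCongr]
      · simp only [Function.comp_apply]
        rcases h : finSumFinEquiv.symm z with zN | z1
        · have : z = finSumFinEquiv (Sum.inl zN) := by
            rw [← h, Equiv.apply_symm_apply]
          simp [he, this, Equiv.sumAssoc, Equiv.sumCongr]
        · have : z = finSumFinEquiv (Sum.inr z1) := by
            rw [← h, Equiv.apply_symm_apply]
          have hz1 : z1 = 0 := Subsingleton.elim _ _
          simp [he, this, hz1, Equiv.sumAssoc, Equiv.sumCongr]
    · rintro ⟨w, t, hwt⟩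
      refine ⟨fun j => Sum.elim w (fun _ => t) (finSumFinEquiv.symm j), ?_⟩
      convert hwt using 2
      funext j
      rcases j with a | z
      · simp [he, Equiv.sumAssoc, Equiv.sumCongr]
      · simp only [Function.comp_apply]
        rcases h : finSumFinEquiv.symm z with zN | z1
        · have : z = finSumFinEquiv (Sum.inl zN) := by
            rw [← h, Equiv.apply_symm_apply]
          simp [he, this, Equiv.sumAssoc, Equiv.sumCongr]
        · have : z = finSumFinEquiv (Sum.inr z1) := by
            rw [← h, Equiv.apply_symm_apply]
          simp [he, this, Equiv.sumAssoc, Equiv.sumCongr]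


variable {κ : Type} [Fintype κ] [DecidableEq κ]

/-- Every element of a set of ℕ-vectors lies above a minimal element. -/
lemma exists_minimal_le (T : Set (κ → ℕ)) :
    ∀ a ∈ T, ∃ v ∈ T, v ≤ a ∧ ∀ u ∈ T, u ≤ v → u = v := by
  classical
  have key : ∀ (s : ℕ) (a : κ → ℕ), (∑ j, a j) ≤ s → a ∈ T →
      ∃ v ∈ T, v ≤ a ∧ ∀ u ∈ T, u ≤ v → u = v := by
    intro s
    induction s with
    | zero =>
      intro a hs ha
      refine ⟨a, ha, le_refl _, fun u hu hle => ?_⟩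
      have : a = 0 := by
        funext j
        have : a j = 0 := by
          have := Finset.single_le_sum (f := a) (fun j _ => Nat.zero_le _) (Finset.mem_univ j)
          omega
        simpa using this
      subst this
      exact le_antisymm hle (by intro j; exact Nat.zero_le _)
    | succ s ih =>
      intro a hs ha
      by_cases hmin : ∀ u ∈ T, u ≤ a → u = a
      · exact ⟨a, ha, le_refl _, hmin⟩
      · push_neg at hmin
        obtain ⟨u, hu, hua, hne⟩ := hmin
        have hlt : (∑ j, u j) < ∑ j, a j := by
          have hne' : ∃ j, u j < a j := by
            by_contra h
            push_neg at h
            exact hne (le_antisymm hua (fun j => h j))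
          obtain ⟨j0, hj0⟩ := hne'
          exact Finset.sum_lt_sum (fun j _ => hua j) ⟨j0, Finset.mem_univ _, hj0⟩
        obtain ⟨v, hv, hvu, hvmin⟩ := ih u (by omega) hu
        exact ⟨v, hv, le_trans hvu hua, hvmin⟩
  intro a ha
  exact key (∑ j, a j) a (le_refl _) ha

/-- The set of minimal elements of a set of ℕ-vectors is finite (Dickson). -/
lemma minimal_finite (T : Set (κ → ℕ)) :
    {v | v ∈ T ∧ ∀ u ∈ T, u ≤ v → u = v}.Finite := by
  have hanti : IsAntichain (· ≤ ·) {v | v ∈ T ∧ ∀ u ∈ T, u ≤ v → u = v} := by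
    rintro v ⟨hv, _⟩ w ⟨hw, hwmin⟩ hne hle
    exact hne (hwmin v hv hle)
  have inst : ∀ i : κ, IsWellOrder ((fun _ : κ => ℕ) i) (· < ·) :=
    fun _ => inferInstanceAs (IsWellOrder ℕ (· < ·))
  have hpwo : Set.IsPWO {v | v ∈ T ∧ ∀ u ∈ T, u ≤ v → u = v} :=
    Set.isPWO_of_wellQuasiOrderedLE _
  exact hanti.finite_of_partiallyWellOrderedOn hpwo

/-- Generation: every element of a subtraction-closed set is a sum of a list of
minimal nonzero elements. -/
lemma hilbert_gen (P : Set (κ → ℕ))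
    (hsub : ∀ u v, u ∈ P → v ∈ P → v ≤ u → (u - v) ∈ P) :
    ∀ u ∈ P, ∃ l : List (κ → ℕ),
      (∀ r ∈ l, r ∈ {v | v ∈ (P \ {0}) ∧ ∀ u ∈ (P \ {0}), u ≤ v → u = v}) ∧ u = l.sum := by
  classical
  have key : ∀ (s : ℕ) (u : κ → ℕ), (∑ j, u j) ≤ s → u ∈ P →
      ∃ l : List (κ → ℕ),
        (∀ r ∈ l, r ∈ {v | v ∈ (P \ {0}) ∧ ∀ u ∈ (P \ {0}), u ≤ v → u = v}) ∧ u = l.sum := by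
    intro s
    induction s with
    | zero =>
      intro u hs hu
      have hu0 : u = 0 := by
        funext j
        have h1 := Finset.single_le_sum (f := u) (fun j _ => Nat.zero_le _) (Finset.mem_univ j)
        simp only [Pi.zero_apply]
        omega
      exact ⟨[], by simp, by simp [hu0]⟩
    | succ s ih =>
      intro u hs hu
      by_cases hz : u = 0
      · exact ⟨[], by simp, by simp [hz]⟩
      · have hu' : u ∈ P \ {0} := ⟨hu, hz⟩
        obtain ⟨v, hv, hvu, hvmin⟩ := exists_minimal_le (P \ {0}) u hu'
        have hvP : v ∈ P := hv.1
        have hvne : v ≠ 0 := hv.2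
        have hrest : (u - v) ∈ P := hsub u v hu hvP hvu
        have hlt : (∑ j, (u - v) j) < ∑ j, u j := by
          obtain ⟨j0, hj0⟩ : ∃ j, 0 < v j := by
            by_contra h
            push_neg at h
            exact hvne (funext fun j => by have h2 := h j; simp only [Pi.zero_apply]; omega)
          have : ∀ j, (u - v) j ≤ u j := fun j => Nat.sub_le _ _
          refine Finset.sum_lt_sum (fun j _ => this j) ⟨j0, Finset.mem_univ _, ?_⟩
          have h1 : v j0 ≤ u j0 := hvu j0
          simp only [Pi.sub_apply]
          omega
        obtain ⟨l, hl, hlsum⟩ := ih (u - v) (by omega) hrest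
        refine ⟨v :: l, ?_, ?_⟩
        · intro r hr
          rcases List.mem_cons.1 hr with rfl | hr'
          · exact ⟨hv, hvmin⟩
          · exact hl r hr'
        · simp only [List.sum_cons, ← hlsum]
          funext j
          have h1 : v j ≤ u j := hvu j
          simp only [Pi.add_apply, Pi.sub_apply]
          omega
  intro u hu
  exact key (∑ j, u j) u (le_refl _) hu

/-- Convert a list-sum representation into a coefficient representation over a Finset. -/
lemma list_sum_eq_count_sum (R : Finset (κ → ℕ)) (l : List (κ → ℕ))
    (hl : ∀ r ∈ l, r ∈ R) :
    l.sum = ∑ r ∈ R, (l.count r) • r := by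
  classical
  induction l with
  | nil => simp
  | cons a l ih =>
    have ha : a ∈ R := hl a List.mem_cons_self
    have ih' := ih (fun r hr => hl r (List.mem_cons_of_mem _ hr))
    simp only [List.sum_cons, ih']
    have : ∀ r ∈ R, ((a :: l).count r) • r = (l.count r) • r + (if r = a then a else 0) := by
      intro r _
      rcases eq_or_ne r a with rfl | hne
      · simp [List.count_cons_self, add_smul]
      · simp [List.count_cons_of_ne hne.symm, hne]
    rw [Finset.sum_congr rfl this, Finset.sum_add_distrib, Finset.sum_ite_eq' R a (fun _ => a)]
    simp [ha]
    abel


lemma convex_nonneg_orthant (n : ℕ) : Convex ℝ {x : Fin n → ℝ | ∀ j, 0 ≤ x j} := by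
  intro x hx y hy a b ha hb _
  intro j
  have := hx j; have := hy j
  simp only [Pi.add_apply, Pi.smul_apply, smul_eq_mul]
  nlinarith

lemma convex_linear_halfspace {n : ℕ} (a : Fin n → ℝ) (β : ℝ) :
    Convex ℝ {x : Fin n → ℝ | ∑ j, a j * x j ≤ β} := by
  have hlin : IsLinearMap ℝ (fun x : Fin n → ℝ => ∑ j, a j * x j) := by
    constructor
    · intro x y
      simp [mul_add, Finset.sum_add_distrib]
    · intro c x
      simp [Finset.mul_sum, mul_left_comm, mul_comm, mul_assoc]
  exact convex_halfSpace_le hlin β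

lemma convexHull_subset_halfspace {n : ℕ} {S : Set (Fin n → ℝ)} {a : Fin n → ℝ} {β : ℝ}
    (h : ∀ s ∈ S, ∑ j, a j * s j ≤ β) :
    convexHull ℝ S ⊆ {x | ∑ j, a j * x j ≤ β} :=
  convexHull_min h (convex_linear_halfspace a β)

lemma convexHull_subset_orthant {n : ℕ} {S : Set (Fin n → ℝ)}
    (h : ∀ s ∈ S, ∀ j, 0 ≤ s j) :
    convexHull ℝ S ⊆ {x | ∀ j, 0 ≤ x j} :=
  convexHull_min h (convex_nonneg_orthant n)

lemma convexHull_add_ray {n : ℕ} {S : Set (Fin n → ℝ)} {r : Fin n → ℝ}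
    (hstep : ∀ s ∈ S, s + r ∈ S) :
    ∀ (lam : ℝ), 0 ≤ lam → ∀ x ∈ convexHull ℝ S, x + lam • r ∈ convexHull ℝ S := by
  have hnat : ∀ (k : ℕ), ∀ x ∈ convexHull ℝ S, x + (k : ℝ) • r ∈ convexHull ℝ S := by
    intro k
    induction k with
    | zero => intro x hx; simpa using hx
    | succ k ih =>
      intro x hx
      have h1 : x + (k : ℝ) • r ∈ convexHull ℝ S := ih x hx
      have h2 : r +ᵥ convexHull ℝ S ⊆ convexHull ℝ S := by
        rw [← convexHull_vadd]
        apply convexHull_mono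
        intro z hz
        obtain ⟨s, hs, rfl⟩ := hz
        have := hstep s hs
        simpa [add_comm] using this
      have h3 : r +ᵥ (x + (k : ℝ) • r) ∈ convexHull ℝ S := h2 ⟨_, h1, rfl⟩
      have : r +ᵥ (x + (k : ℝ) • r) = x + ((k : ℝ) + 1) • r := by
        simp only [vadd_eq_add, add_smul, one_smul]
        abel
      rw [this] at h3
      convert h3 using 2
      push_cast
      ring
  intro lam hlam x hx
  set k := ⌊lam⌋₊ with hk
  have hfl : (k : ℝ) ≤ lam := Nat.floor_le hlam
  have hfu : lam < (k : ℝ) + 1 := Nat.lt_floor_add_one lam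
  set f := lam - (k : ℝ) with hf
  have hf0 : 0 ≤ f := by simp [hf]; linarith
  have hf1 : f ≤ 1 := by simp [hf]; linarith
  have e1 : x + lam • r =
      (1 - f) • (x + (k : ℝ) • r) + f • (x + ((k : ℝ) + 1) • r) := by
    have : lam = (k : ℝ) + f := by simp [hf]
    rw [this]
    module
  rw [e1]
  have m1 : x + (k : ℝ) • r ∈ convexHull ℝ S := hnat k x hx
  have m2 : x + ((k : ℝ) + 1) • r ∈ convexHull ℝ S := by
    have := hnat (k + 1) x hx
    convert this using 2
    push_cast
    ring
  exact (convex_convexHull ℝ S) m1 m2 (by linarith) (by linarith) (by ring)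

lemma convexHull_add_rays {n : ℕ} {S : Set (Fin n → ℝ)} {q : ℕ}
    {rr : Fin q → Fin n → ℝ} (hstep : ∀ i, ∀ s ∈ S, s + rr i ∈ S)
    (lam : Fin q → ℝ) (hlam : ∀ i, 0 ≤ lam i) :
    ∀ x ∈ convexHull ℝ S, x + ∑ i, lam i • rr i ∈ convexHull ℝ S := by
  classical
  have key : ∀ (F : Finset (Fin q)), ∀ x ∈ convexHull ℝ S,
      x + ∑ i ∈ F, lam i • rr i ∈ convexHull ℝ S := by
    intro F
    induction F using Finset.induction with
    | empty => intro x hx; simpa using hx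
    | insert _ _ hnotmem ih =>
      rename_i a F'
      intro x hx
      rw [Finset.sum_insert hnotmem]
      have h1 := ih x hx
      have h2 := convexHull_add_ray (hstep a) (lam a) (hlam a) _ h1
      convert h2 using 1
      abel
  exact key Finset.univ

noncomputable def signedRow {m n : ℕ} (A : Matrix (Fin m) (Fin n) ℚ)
    (Jp : Finset (Fin n)) (i : Fin m) (j : Fin n) : ℝ :=
  if j ∈ Jp then (A i j : ℝ) else -(A i j : ℝ)

/-- The `(J⁺,J⁻)` sign-pattern polyhedron `P = {x ≥ 0 : Σ_{j∈J⁺} A_{ij} x_j − Σ_{j∈J⁻} A_{ij} x_j ≤ b_i ∀ i}`. -/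
noncomputable def signPatternPoly {m n : ℕ} (A : Matrix (Fin m) (Fin n) ℚ) (b : Fin m → ℚ)
    (Jp : Finset (Fin n)) : Set (Fin n → ℝ) :=
  {x | (∀ j, 0 ≤ x j) ∧ ∀ i, ∑ j, signedRow A Jp i j * x j ≤ (b i : ℝ)}

/-- `P^I(λ)`: the convex hull of the nonnegative integer points satisfying the
aggregated constraint `λᵀAx ≤ λᵀb`. -/
noncomputable def aggIntHull {m n : ℕ} (A : Matrix (Fin m) (Fin n) ℚ) (b : Fin m → ℚ)
    (Jp : Finset (Fin n)) (lam : Fin m → ℝ) : Set (Fin n → ℝ) :=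
  convexHull ℝ {x | (∀ j, 0 ≤ x j) ∧ (∀ j, ∃ z : ℤ, x j = (z : ℝ)) ∧
    ∑ i, lam i * ∑ j, signedRow A Jp i j * x j ≤ ∑ i, lam i * (b i : ℝ)}

/-- The aggregation closure `𝒜(P) = ∩_{λ ≥ 0} P^I(λ)`. -/
noncomputable def aggClosure {m n : ℕ} (A : Matrix (Fin m) (Fin n) ℚ) (b : Fin m → ℚ)
    (Jp : Finset (Fin n)) : Set (Fin n → ℝ) :=
  ⋂ lam ∈ {l : Fin m → ℝ | ∀ i, 0 ≤ l i}, aggIntHull A b Jp lam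

/-- The integer hull `P^I = conv(P ∩ ℤⁿ)` of a `(J⁺,J⁻)` sign-pattern
polyhedron with rational data is again described by nonnegativity constraints together with
finitely many inequalities `Σ_j a_j x_j ≤ β`, each having the same sign pattern
(`a_j ≥ 0` for `j ∈ J⁺` and `a_j ≤ 0` for `j ∈ J⁻`). -/
-- ## Main theorem
theorem signPattern_integerHull_is_signPattern
    {m n : ℕ} (hm : 0 < m) (hn : 0 < n)
    (Jp Jn : Finset (Fin n)) (hdisj : Disjoint Jp Jn) (hunion : Jp ∪ Jn = Finset.univ)
    (A : Matrix (Fin m) (Fin n) ℚ) (b : Fin m → ℚ)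
    (hA : ∀ i j, 0 ≤ A i j) (hb : ∀ i, 0 ≤ b i)
    (hAb : ∀ i, ∀ j ∈ Jp, A i j ≤ b i) :
    ∃ (k : ℕ) (a : Fin k → Fin n → ℝ) (β : Fin k → ℝ),
      (∀ i : Fin k, (∀ j ∈ Jp, 0 ≤ a i j) ∧ (∀ j ∈ Jn, a i j ≤ 0)) ∧
      convexHull ℝ {x ∈ signPatternPoly A b Jp | ∀ j, ∃ z : ℤ, x j = (z : ℝ)} =
        {x : Fin n → ℝ | (∀ j, 0 ≤ x j) ∧ ∀ i : Fin k, ∑ j, a i j * x j ≤ β i} := by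
  classical
  -- ## Step 0: scale the rational data to natural numbers
  have scale : ∀ i : Fin m, ∃ (Ar : Fin n → ℕ) (br : ℕ) (Dd : ℕ), 0 < Dd ∧
      (∀ j, ((Ar j : ℝ)) = (Dd : ℝ) * ((A i j : ℚ) : ℝ)) ∧
      ((br : ℝ) = (Dd : ℝ) * ((b i : ℚ) : ℝ)) := by
    intro i
    refine ⟨fun j => (A i j).num.toNat * ((b i).den * ∏ j' ∈ Finset.univ.erase j, (A i j').den),
      (b i).num.toNat * ∏ j', (A i j').den,
      (b i).den * ∏ j', (A i j').den, ?_, ?_, ?_⟩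
    · exact Nat.mul_pos (b i).den_pos (Finset.prod_pos (fun j' _ => (A i j').den_pos))
    · intro j
      have hnum : (((A i j).num.toNat : ℚ)) = ((A i j).num : ℚ) := by
        exact_mod_cast Int.toNat_of_nonneg (Rat.num_nonneg.2 (hA i j))
      have h1 : ((A i j).num : ℚ) = A i j * (A i j).den := by
        have hd : (((A i j).den : ℚ)) ≠ 0 := by exact_mod_cast (A i j).den_nz
        have h := Rat.num_div_den (A i j)
        rw [div_eq_iff hd] at h
        exact h
      have hq : (((A i j).num.toNat * ((b i).den * ∏ j' ∈ Finset.univ.erase j, (A i j').den) : ℕ) : ℚ) =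
          ((((b i).den * ∏ j', (A i j').den : ℕ)) : ℚ) * A i j := by
        push_cast
        rw [hnum, h1, ← Finset.mul_prod_erase Finset.univ (fun j' => ((A i j').den : ℚ))
          (Finset.mem_univ j)]
        ring
      have h2 := congrArg (fun z : ℚ => (z : ℝ)) hq
      push_cast at h2 ⊢
      linarith [h2]
    · have hnum : (((b i).num.toNat : ℚ)) = ((b i).num : ℚ) := by
        exact_mod_cast Int.toNat_of_nonneg (Rat.num_nonneg.2 (hb i))
      have h1 : ((b i).num : ℚ) = b i * (b i).den := by
        have hd : (((b i).den : ℚ)) ≠ 0 := by exact_mod_cast (b i).den_nz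
        have h := Rat.num_div_den (b i)
        rw [div_eq_iff hd] at h
        exact h
      have hq : ((((b i).num.toNat * ∏ j', (A i j').den : ℕ)) : ℚ) =
          ((((b i).den * ∏ j', (A i j').den : ℕ)) : ℚ) * b i := by
        push_cast
        rw [hnum, h1]
        ring
      have h2 := congrArg (fun z : ℚ => (z : ℝ)) hq
      push_cast at h2 ⊢
      linarith [h2]
  choose Ab bb D hD hABr hbbr using scale
  -- ## Step 1: splitting the signed sum
  have hnotp : ∀ j ∈ Jn, j ∉ Jp := fun j hj hj' => (Finset.disjoint_left.1 hdisj) hj' hj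
  have hsplit : ∀ (i : Fin m) (x : Fin n → ℝ),
      ∑ j, signedRow A Jp i j * x j =
        ∑ j ∈ Jp, ((A i j : ℚ) : ℝ) * x j - ∑ j ∈ Jn, ((A i j : ℚ) : ℝ) * x j := by
    intro i x
    have h0 : (Finset.univ : Finset (Fin n)) = Jp ∪ Jn := hunion.symm
    rw [show (∑ j, signedRow A Jp i j * x j) = ∑ j ∈ Finset.univ, signedRow A Jp i j * x j
        from rfl, h0, Finset.sum_union hdisj]
    have h1 : ∑ j ∈ Jp, signedRow A Jp i j * x j = ∑ j ∈ Jp, ((A i j : ℚ) : ℝ) * x j :=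
      Finset.sum_congr rfl (fun j hj => by simp [signedRow, hj])
    have h2 : ∑ j ∈ Jn, signedRow A Jp i j * x j = ∑ j ∈ Jn, -(((A i j : ℚ) : ℝ) * x j) :=
      Finset.sum_congr rfl (fun j hj => by
        simp only [signedRow]
        rw [if_neg (hnotp j hj)]
        ring)
    rw [h1, h2]
    rw [Finset.sum_neg_distrib]
    ring
  -- ## Step 2: the inequality over the naturals
  have hineq_iff : ∀ (i : Fin m) (x : Fin n → ℕ),
      (∑ j, signedRow A Jp i j * ((x j : ℝ)) ≤ ((b i : ℚ) : ℝ)) ↔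
      ((∑ j ∈ Jp, Ab i j * x j) ≤ bb i + ∑ j ∈ Jn, Ab i j * x j) := by
    intro i x
    rw [hsplit]
    have hDpos : (0 : ℝ) < (D i : ℝ) := by exact_mod_cast hD i
    have hcast : ∀ (F : Finset (Fin n)),
        ((∑ j ∈ F, Ab i j * x j : ℕ) : ℝ) =
          (D i : ℝ) * ∑ j ∈ F, ((A i j : ℚ) : ℝ) * (x j : ℝ) := by
      intro F
      push_cast
      rw [Finset.mul_sum]
      exact Finset.sum_congr rfl (fun j _ => by rw [hABr i j]; ring)
    constructor
    · intro h
      rw [← Nat.cast_le (α := ℝ), Nat.cast_add, hcast, hcast, hbbr i]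
      nlinarith [mul_le_mul_of_nonneg_left h hDpos.le]
    · intro h
      have h2 := (Nat.cast_le (α := ℝ)).2 h
      rw [Nat.cast_add, hcast, hcast, hbbr i] at h2
      nlinarith [h2, hDpos]
  -- ## Step 3: the set of integer points and its natural-number model
  set ρ : (Fin n → ℕ) → (Fin n → ℝ) := fun x j => (x j : ℝ) with hρ
  set Sset : Set (Fin n → ℝ) :=
    {x ∈ signPatternPoly A b Jp | ∀ j, ∃ z : ℤ, x j = (z : ℝ)} with hSsetDef
  set Snat : Set (Fin n → ℕ) :=
    {x | ∀ i, (∑ j ∈ Jp, Ab i j * x j) ≤ bb i + ∑ j ∈ Jn, Ab i j * x j} with hSnatDef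
  have hmemS : ∀ s, s ∈ Sset ↔ ((∀ j, 0 ≤ s j) ∧ (∀ i, ∑ j, signedRow A Jp i j * s j ≤ ((b i : ℚ) : ℝ))
      ∧ (∀ j, ∃ z : ℤ, s j = (z : ℝ))) := by
    intro s
    constructor
    · rintro ⟨⟨h1, h2⟩, h3⟩; exact ⟨h1, h2, h3⟩
    · rintro ⟨h1, h2, h3⟩; exact ⟨⟨h1, h2⟩, h3⟩
  have hbridge : Sset = ρ '' Snat := by
    ext s
    rw [hmemS]
    constructor
    · rintro ⟨hpos, hineq, hint⟩
      choose z hz using hint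
      have hznn : ∀ j, ((z j).toNat : ℝ) = s j := by
        intro j
        have h0 : (0:ℝ) ≤ ((z j : ℤ) : ℝ) := by rw [← hz j]; exact hpos j
        have : (0:ℤ) ≤ z j := by exact_mod_cast h0
        rw [hz j]
        exact_mod_cast Int.toNat_of_nonneg this
      refine ⟨fun j => (z j).toNat, ?_, funext fun j => hznn j⟩
      intro i
      rw [← hineq_iff]
      have : ∀ j, ((( fun j => (z j).toNat) j : ℕ) : ℝ) = s j := hznn
      calc ∑ j, signedRow A Jp i j * (((z j).toNat : ℕ) : ℝ)
          = ∑ j, signedRow A Jp i j * s j :=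
            Finset.sum_congr rfl (fun j _ => by rw [hznn j])
        _ ≤ _ := hineq i
    · rintro ⟨x, hx, rfl⟩
      refine ⟨fun j => Nat.cast_nonneg _, fun i => (hineq_iff i x).2 (hx i),
        fun j => ⟨(x j : ℤ), by simp [hρ]⟩⟩
  -- ## Step 4: slack-variable sets over ℕ
  set W : Set ((Fin n ⊕ Fin m) → ℕ) :=
    {w | ∀ i, (∑ j ∈ Jp, Ab i j * w (Sum.inl j)) + w (Sum.inr i) =
      bb i + ∑ j ∈ Jn, Ab i j * w (Sum.inl j)} with hWdef
  set M : Set ((Fin n ⊕ Fin m) → ℕ) :=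
    {u | ∀ i, (∑ j ∈ Jp, Ab i j * u (Sum.inl j)) + u (Sum.inr i) =
      ∑ j ∈ Jn, Ab i j * u (Sum.inl j)} with hMdef
  have hexpand : ∀ (F : Finset (Fin n)) (i : Fin m) (u v : (Fin n ⊕ Fin m) → ℕ),
      ∑ j ∈ F, Ab i j * (u + v) (Sum.inl j) =
        (∑ j ∈ F, Ab i j * u (Sum.inl j)) + ∑ j ∈ F, Ab i j * v (Sum.inl j) := by
    intro F i u v
    rw [← Finset.sum_add_distrib]
    exact Finset.sum_congr rfl (fun j _ => by simp [Pi.add_apply, mul_add])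
  have hWsub : ∀ w v, w ∈ W → v ∈ W → v ≤ w → (w - v) ∈ M := by
    intro w v hw hv hle i
    have h2 := hv i
    have he : (w - v) + v = w := funext fun t => Nat.sub_add_cancel (hle t)
    have h1 : (∑ j ∈ Jp, Ab i j * ((w - v) + v) (Sum.inl j)) + ((w - v) + v) (Sum.inr i) =
        bb i + ∑ j ∈ Jn, Ab i j * ((w - v) + v) (Sum.inl j) := by
      rw [he]
      exact hw i
    rw [hexpand, hexpand] at h1
    simp only [Pi.add_apply] at h1
    omega
  have hMsub : ∀ u v, u ∈ M → v ∈ M → v ≤ u → (u - v) ∈ M := by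
    intro u v hu hv hle i
    have h2 := hv i
    have he : (u - v) + v = u := funext fun t => Nat.sub_add_cancel (hle t)
    have h1 : (∑ j ∈ Jp, Ab i j * ((u - v) + v) (Sum.inl j)) + ((u - v) + v) (Sum.inr i) =
        ∑ j ∈ Jn, Ab i j * ((u - v) + v) (Sum.inl j) := by
      rw [he]
      exact hu i
    rw [hexpand, hexpand] at h1
    simp only [Pi.add_apply] at h1
    omega
  have hstepNat : ∀ u, u ∈ M → ∀ x, x ∈ Snat → (fun j => x j + u (Sum.inl j)) ∈ Snat := by
    intro u hu x hx i
    have h1 := hx i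
    have h2 := hu i
    have hexp : ∀ (F : Finset (Fin n)),
        ∑ j ∈ F, Ab i j * (x j + u (Sum.inl j)) =
          (∑ j ∈ F, Ab i j * x j) + ∑ j ∈ F, Ab i j * u (Sum.inl j) := by
      intro F
      rw [← Finset.sum_add_distrib]
      exact Finset.sum_congr rfl (fun j _ => by rw [mul_add])
    simp only [hexp]
    omega
  have hWproj : ∀ w, w ∈ W → (fun j => w (Sum.inl j)) ∈ Snat := by
    intro w hw i
    have h1 := hw i
    show (∑ j ∈ Jp, Ab i j * w (Sum.inl j)) ≤ bb i + ∑ j ∈ Jn, Ab i j * w (Sum.inl j)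
    omega
  have hSW : ∀ x, x ∈ Snat →
      (Sum.elim x (fun i => bb i + (∑ j ∈ Jn, Ab i j * x j) - ∑ j ∈ Jp, Ab i j * x j) ∈ W) := by
    intro x hx i
    have h1 := hx i
    simp only [Sum.elim_inl, Sum.elim_inr]
    omega
  -- ## Step 5: minimal elements, Hilbert basis, decomposition
  have hWminFin := minimal_finite W
  have hMminFin := minimal_finite (M \ {0})
  set Vfin := hWminFin.toFinset with hVfin
  set Rfin := hMminFin.toFinset with hRfin
  set np := Vfin.card with hnp
  set nq := Rfin.card with hnq
  set vhat : Fin np → (Fin n ⊕ Fin m) → ℕ := fun k => ((Vfin.equivFin.symm k : ↥Vfin) : _) with hvhat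
  set rhat : Fin nq → (Fin n ⊕ Fin m) → ℕ := fun k => ((Rfin.equivFin.symm k : ↥Rfin) : _) with hrhat
  have hvhatW : ∀ k, vhat k ∈ W := by
    intro k
    have h2 : ((Vfin.equivFin.symm k : ↥Vfin) : (Fin n ⊕ Fin m) → ℕ) ∈ hWminFin.toFinset :=
      (Vfin.equivFin.symm k).2
    exact (hWminFin.mem_toFinset.1 h2).1
  have hrhatM : ∀ k, rhat k ∈ M := by
    intro k
    have h2 : ((Rfin.equivFin.symm k : ↥Rfin) : (Fin n ⊕ Fin m) → ℕ) ∈ hMminFin.toFinset :=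
      (Rfin.equivFin.symm k).2
    exact (hMminFin.mem_toFinset.1 h2).1.1
  have hdecomp : ∀ w ∈ W, ∃ (k0 : Fin np) (cnt : Fin nq → ℕ),
      w = vhat k0 + ∑ i, cnt i • rhat i := by
    intro w hw
    obtain ⟨v, hvW, hvle, hvmin⟩ := exists_minimal_le W w hw
    have hvmem : v ∈ Vfin := hWminFin.mem_toFinset.2 ⟨hvW, hvmin⟩
    have hwv : (w - v) ∈ M := hWsub w v hw hvW hvle
    obtain ⟨l, hlmem, hlsum⟩ := hilbert_gen M hMsub (w - v) hwv
    have hcount := list_sum_eq_count_sum Rfin l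
      (fun r hr => hMminFin.mem_toFinset.2 (hlmem r hr))
    have hreindex : ∑ r ∈ Rfin, (l.count r) • r = ∑ i : Fin nq, (l.count (rhat i)) • rhat i := by
      rw [← Finset.sum_coe_sort Rfin (fun r => (l.count r) • r)]
      rw [← Equiv.sum_comp Rfin.equivFin.symm
        (fun r : ↥Rfin => (l.count (r : (Fin n ⊕ Fin m) → ℕ)) • (r : (Fin n ⊕ Fin m) → ℕ))]
    refine ⟨Vfin.equivFin ⟨v, hvmem⟩, fun i => l.count (rhat i), ?_⟩
    have hv' : vhat (Vfin.equivFin ⟨v, hvmem⟩) = v := by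
      rw [hvhat]
      simp
    rw [hv']
    have hw' : w = v + (w - v) := funext fun t => by
      have h9 : v t ≤ w t := hvle t
      simp only [Pi.add_apply, Pi.sub_apply]
      omega
    rw [hw', hlsum, hcount, hreindex]
  -- ## Step 6: real incarnations
  set vv : Fin np → (Fin n → ℝ) := fun k j => ((vhat k (Sum.inl j) : ℕ) : ℝ) with hvv
  set rr : Fin nq → (Fin n → ℝ) := fun k j => ((rhat k (Sum.inl j) : ℕ) : ℝ) with hrr
  have hvS : ∀ k, vv k ∈ Sset := by
    intro k
    rw [hbridge]
    exact ⟨fun j => vhat k (Sum.inl j), hWproj _ (hvhatW k), rfl⟩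
  have hray : ∀ k, ∀ s ∈ Sset, s + rr k ∈ Sset := by
    intro k s hs
    rw [hbridge] at hs ⊢
    obtain ⟨x, hx, rfl⟩ := hs
    refine ⟨fun j => x j + rhat k (Sum.inl j), hstepNat _ (hrhatM k) x hx, ?_⟩
    funext j
    simp [hρ, hrr, Pi.add_apply]
  -- ## Step 7: the lifted polyhedron and Fourier–Motzkin
  set eaux : (Fin np ⊕ Fin nq) ≃ Fin (np + nq) := finSumFinEquiv with heaux
  set row : (Fin n → ℝ) → (Fin np → ℝ) → (Fin nq → ℝ) → ((Fin n ⊕ Fin (np + nq)) → ℝ) :=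
    fun φ ψ χ => Sum.elim φ (fun w' => Sum.elim ψ χ (eaux.symm w')) with hrowdef
  have hrowsum : ∀ (φ : Fin n → ℝ) (ψ : Fin np → ℝ) (χ : Fin nq → ℝ)
      (y : (Fin n ⊕ Fin (np + nq)) → ℝ),
      ∑ t, row φ ψ χ t * y t =
        (∑ j, φ j * y (Sum.inl j)) + ((∑ k, ψ k * y (Sum.inr (eaux (Sum.inl k)))) +
          ∑ i, χ i * y (Sum.inr (eaux (Sum.inr i)))) := by
    intro φ ψ χ y
    have e1 : ∑ j : Fin n, row φ ψ χ (Sum.inl j) * y (Sum.inl j) = ∑ j, φ j * y (Sum.inl j) :=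
      Finset.sum_congr rfl (fun j _ => by rw [hrowdef]; simp)
    have e2 : ∑ w' : Fin (np + nq), row φ ψ χ (Sum.inr w') * y (Sum.inr w') =
        (∑ k, ψ k * y (Sum.inr (eaux (Sum.inl k)))) +
          ∑ i, χ i * y (Sum.inr (eaux (Sum.inr i))) := by
      rw [← Equiv.sum_comp eaux (fun w' => row φ ψ χ (Sum.inr w') * y (Sum.inr w'))]
      rw [Fintype.sum_sum_type]
      have f1 : ∀ k : Fin np, row φ ψ χ (Sum.inr (eaux (Sum.inl k))) * y (Sum.inr (eaux (Sum.inl k)))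
          = ψ k * y (Sum.inr (eaux (Sum.inl k))) := fun k => by
        rw [hrowdef]; simp
      have f2 : ∀ i : Fin nq, row φ ψ χ (Sum.inr (eaux (Sum.inr i))) * y (Sum.inr (eaux (Sum.inr i)))
          = χ i * y (Sum.inr (eaux (Sum.inr i))) := fun i => by
        rw [hrowdef]; simp
      rw [Finset.sum_congr rfl (fun k _ => f1 k), Finset.sum_congr rfl (fun i _ => f2 i)]
    rw [Fintype.sum_sum_type, e1, e2]
  -- row index type
  set ι : Type := (Fin n ⊕ Fin n) ⊕ ((Fin np ⊕ Fin nq) ⊕ Bool) with hι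
  set crow : ι → ((Fin n ⊕ Fin (np + nq)) → ℝ) :=
    Sum.elim
      (Sum.elim
        (fun j => row (fun j' => if j' = j then 1 else 0) (fun k => -(vv k j)) (fun i => -(rr i j)))
        (fun j => row (fun j' => if j' = j then -1 else 0) (fun k => vv k j) (fun i => rr i j)))
      (Sum.elim
        (Sum.elim
          (fun k0 => row (fun _ => 0) (fun k => if k = k0 then -1 else 0) (fun _ => 0))
          (fun i0 => row (fun _ => 0) (fun _ => 0) (fun i => if i = i0 then -1 else 0)))
        (fun bl => row (fun _ => 0) (fun _ => if bl then 1 else -1) (fun _ => 0))) with hcrow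
  set drow : ι → ℝ :=
    Sum.elim (Sum.elim (fun _ => 0) (fun _ => 0))
      (Sum.elim (Sum.elim (fun _ => 0) (fun _ => 0)) (fun bl => if bl then 1 else -1)) with hdrow
  set Lift : Set ((Fin n ⊕ Fin (np + nq)) → ℝ) :=
    {y | ∀ idx : ι, ∑ t, crow idx t * y t ≤ drow idx} with hLift
  have hLiftPoly : IsPolySet Lift := isPolySet_of_index crow drow
  -- characterization of membership in Lift
  have hmemLift : ∀ y : (Fin n ⊕ Fin (np + nq)) → ℝ, y ∈ Lift ↔
      ((∀ j, y (Sum.inl j) = (∑ k, vv k j * y (Sum.inr (eaux (Sum.inl k)))) +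
          ∑ i, rr i j * y (Sum.inr (eaux (Sum.inr i)))) ∧
        (∀ k, 0 ≤ y (Sum.inr (eaux (Sum.inl k)))) ∧
        (∀ i, 0 ≤ y (Sum.inr (eaux (Sum.inr i)))) ∧
        (∑ k, y (Sum.inr (eaux (Sum.inl k)))) = 1) := by
    intro y
    set μ : Fin np → ℝ := fun k => y (Sum.inr (eaux (Sum.inl k))) with hμ
    set lam : Fin nq → ℝ := fun i => y (Sum.inr (eaux (Sum.inr i))) with hlam
    have hv1 : ∀ j, ∑ t, crow (Sum.inl (Sum.inl j)) t * y t =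
        y (Sum.inl j) - ((∑ k, vv k j * μ k) + ∑ i, rr i j * lam i) := by
      intro j
      rw [hcrow]
      simp only [Sum.elim_inl]
      rw [hrowsum]
      have e3 : ∑ j', (if j' = j then (1:ℝ) else 0) * y (Sum.inl j') = y (Sum.inl j) := by
        rw [Finset.sum_congr rfl (fun j' _ => show (if j' = j then (1:ℝ) else 0) * y (Sum.inl j')
            = if j' = j then y (Sum.inl j') else 0 from by split <;> ring)]
        rw [Finset.sum_ite_eq' Finset.univ j (fun j' => y (Sum.inl j'))]
        simp
      rw [e3]
      have e1 : ∑ k, -(vv k j) * μ k = -∑ k, vv k j * μ k := by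
        rw [← Finset.sum_neg_distrib]
        exact Finset.sum_congr rfl (fun k _ => by ring)
      have e2 : ∑ i, -(rr i j) * lam i = -∑ i, rr i j * lam i := by
        rw [← Finset.sum_neg_distrib]
        exact Finset.sum_congr rfl (fun i _ => by ring)
      rw [e1, e2]
      try ring
    have hv2 : ∀ j, ∑ t, crow (Sum.inl (Sum.inr j)) t * y t =
        -(y (Sum.inl j)) + ((∑ k, vv k j * μ k) + ∑ i, rr i j * lam i) := by
      intro j
      rw [hcrow]
      simp only [Sum.elim_inl, Sum.elim_inr]
      rw [hrowsum]
      have e0 : ∑ j', (if j' = j then (-1:ℝ) else 0) * y (Sum.inl j') = -(y (Sum.inl j)) := by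
        rw [Finset.sum_congr rfl (fun j' _ => show (if j' = j then (-1:ℝ) else 0) * y (Sum.inl j')
            = if j' = j then -(y (Sum.inl j')) else 0 from by split <;> ring)]
        rw [Finset.sum_ite_eq' Finset.univ j (fun j' => -(y (Sum.inl j')))]
        simp
      rw [e0]
      try ring
    have hv3 : ∀ k0, ∑ t, crow (Sum.inr (Sum.inl (Sum.inl k0))) t * y t = -(μ k0) := by
      intro k0
      rw [hcrow]
      simp only [Sum.elim_inl, Sum.elim_inr]
      rw [hrowsum]
      have e0 : ∑ k, (if k = k0 then (-1:ℝ) else 0) * μ k = -(μ k0) := by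
        rw [Finset.sum_congr rfl (fun k _ => show (if k = k0 then (-1:ℝ) else 0) * μ k
            = if k = k0 then -(μ k) else 0 from by split <;> ring)]
        rw [Finset.sum_ite_eq' Finset.univ k0 (fun k => -(μ k))]
        simp
      rw [e0]
      simp
    have hv4 : ∀ i0, ∑ t, crow (Sum.inr (Sum.inl (Sum.inr i0))) t * y t = -(lam i0) := by
      intro i0
      rw [hcrow]
      simp only [Sum.elim_inl, Sum.elim_inr]
      rw [hrowsum]
      have e0 : ∑ i, (if i = i0 then (-1:ℝ) else 0) * lam i = -(lam i0) := by
        rw [Finset.sum_congr rfl (fun i _ => show (if i = i0 then (-1:ℝ) else 0) * lam i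
            = if i = i0 then -(lam i) else 0 from by split <;> ring)]
        rw [Finset.sum_ite_eq' Finset.univ i0 (fun i => -(lam i))]
        simp
      rw [e0]
      simp
    have hv5 : ∀ bl : Bool, ∑ t, crow (Sum.inr (Sum.inr bl)) t * y t =
        (if bl then 1 else -1) * ∑ k, μ k := by
      intro bl
      rw [hcrow]
      simp only [Sum.elim_inr]
      rw [hrowsum]
      rw [Finset.mul_sum]
      simp [hμ]
    constructor
    · intro hy
      refine ⟨fun j => ?_, fun k => ?_, fun i => ?_, ?_⟩
      · have h1 := hy (Sum.inl (Sum.inl j))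
        have h2 := hy (Sum.inl (Sum.inr j))
        rw [hv1 j] at h1
        rw [hv2 j] at h2
        rw [hdrow] at h1 h2
        simp only [Sum.elim_inl, Sum.elim_inr] at h1 h2
        linarith
      · have h1 := hy (Sum.inr (Sum.inl (Sum.inl k)))
        rw [hv3 k, hdrow] at h1
        simp only [Sum.elim_inl, Sum.elim_inr] at h1
        linarith
      · have h1 := hy (Sum.inr (Sum.inl (Sum.inr i)))
        rw [hv4 i, hdrow] at h1
        simp only [Sum.elim_inl, Sum.elim_inr] at h1
        linarith
      · have h1 := hy (Sum.inr (Sum.inr true))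
        have h2 := hy (Sum.inr (Sum.inr false))
        rw [hv5 true, hdrow] at h1
        rw [hv5 false, hdrow] at h2
        simp only [Sum.elim_inr, if_true, if_false, Bool.false_eq_true] at h1 h2
        linarith
    · rintro ⟨heq, hμ0, hlam0, hsum⟩ idx
      rcases idx with (j | j) | ((k0 | i0) | bl)
      · rw [hv1 j, hdrow]
        simp only [Sum.elim_inl]
        rw [heq j]
        simp only [hμ, hlam]
        linarith [le_refl (0:ℝ)]
      · rw [hv2 j, hdrow]
        simp only [Sum.elim_inl, Sum.elim_inr]
        rw [heq j]
        simp only [hμ, hlam]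
        linarith [le_refl (0:ℝ)]
      · rw [hv3 k0, hdrow]
        simp only [Sum.elim_inl, Sum.elim_inr]
        linarith [hμ0 k0]
      · rw [hv4 i0, hdrow]
        simp only [Sum.elim_inl, Sum.elim_inr]
        linarith [hlam0 i0]
      · rw [hv5 bl, hdrow]
        simp only [Sum.elim_inr]
        rw [hsum]
        cases bl <;> norm_num
  -- the projection
  set Q : Set (Fin n → ℝ) := {x | ∃ w : Fin (np + nq) → ℝ, Sum.elim x w ∈ Lift} with hQdef
  have hQpoly : IsPolySet Q := isPolySet_proj (np + nq) Lift hLiftPoly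
  obtain ⟨K, cQ, dQ, hQeq⟩ := hQpoly
  -- ## Step 8: Q = convexHull Sset
  have hSsubQ : Sset ⊆ Q := by
    intro s hs
    rw [hbridge] at hs
    obtain ⟨x, hx, rfl⟩ := hs
    obtain ⟨k0, cnt, hdec⟩ := hdecomp _ (hSW x hx)
    refine ⟨fun t => Sum.elim (fun k => if k = k0 then (1:ℝ) else 0)
      (fun i => (cnt i : ℝ)) (eaux.symm t), ?_⟩
    rw [hmemLift]
    have hμval : ∀ k, Sum.elim (fun k => if k = k0 then (1:ℝ) else 0)
        (fun i => (cnt i : ℝ)) (eaux.symm (eaux (Sum.inl k))) = if k = k0 then 1 else 0 := by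
      intro k
      rw [Equiv.symm_apply_apply]
      rfl
    have hlamval : ∀ i, Sum.elim (fun k => if k = k0 then (1:ℝ) else 0)
        (fun i => (cnt i : ℝ)) (eaux.symm (eaux (Sum.inr i))) = (cnt i : ℝ) := by
      intro i
      rw [Equiv.symm_apply_apply]
      rfl
    refine ⟨fun j => ?_, fun k => ?_, fun i => ?_, ?_⟩
    · simp only [Sum.elim_inl, Sum.elim_inr, hμval, hlamval]
      have hcoord := congrFun hdec (Sum.inl j)
      simp only [Sum.elim_inl, Pi.add_apply, Finset.sum_apply, Pi.smul_apply,
        smul_eq_mul] at hcoord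
      have h1 : ∑ k, vv k j * (if k = k0 then (1:ℝ) else 0) = vv k0 j := by
        rw [Finset.sum_congr rfl (fun k _ => show vv k j * (if k = k0 then (1:ℝ) else 0)
            = if k = k0 then vv k j else 0 from by split <;> ring)]
        rw [Finset.sum_ite_eq' Finset.univ k0 (fun k => vv k j)]
        simp
      rw [h1]
      show ((x j : ℕ) : ℝ) = vv k0 j + ∑ i, rr i j * (cnt i : ℝ)
      rw [hcoord]
      push_cast
      simp only [hvv, hrr]
      congr 1
      exact Finset.sum_congr rfl (fun i _ => by push_cast; ring)
    · simp only [Sum.elim_inr, hμval]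
      split <;> norm_num
    · simp only [Sum.elim_inr, hlamval]
      positivity
    · simp only [Sum.elim_inr]
      rw [Finset.sum_congr rfl (fun k _ => hμval k)]
      rw [Finset.sum_ite_eq' Finset.univ k0 (fun _ => (1:ℝ))]
      simp
  have hQsubHull : Q ⊆ convexHull ℝ Sset := by
    rintro x ⟨w, hw⟩
    rw [hmemLift] at hw
    obtain ⟨heq, hμ0, hlam0, hsum⟩ := hw
    simp only [Sum.elim_inl, Sum.elim_inr] at heq hμ0 hlam0 hsum
    set μ : Fin np → ℝ := fun k => w (eaux (Sum.inl k)) with hμd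
    set lam : Fin nq → ℝ := fun i => w (eaux (Sum.inr i)) with hlamd
    have hx : x = (∑ k, μ k • vv k) + ∑ i, lam i • rr i := by
      funext j
      rw [Pi.add_apply, Finset.sum_apply, Finset.sum_apply]
      rw [heq j]
      congr 1
      · exact Finset.sum_congr rfl (fun k _ => by rw [Pi.smul_apply, smul_eq_mul]; ring)
      · exact Finset.sum_congr rfl (fun i _ => by rw [Pi.smul_apply, smul_eq_mul]; ring)
    have hp0 : (∑ k, μ k • vv k) ∈ convexHull ℝ Sset := by
      apply (convex_convexHull ℝ Sset).sum_mem (fun k _ => hμ0 k) hsum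
      exact fun k _ => subset_convexHull ℝ Sset (hvS k)
    have := convexHull_add_rays hray lam hlam0 _ hp0
    rw [hx]
    exact this
  have hconvQ : Convex ℝ Q := by
    rw [hQeq]
    have : {x : Fin n → ℝ | ∀ i, ∑ j, cQ i j * x j ≤ dQ i} =
        ⋂ i, {x : Fin n → ℝ | ∑ j, cQ i j * x j ≤ dQ i} := by
      ext x
      simp [Set.mem_iInter]
    rw [this]
    exact convex_iInter (fun i => convex_linear_halfspace _ _)
  have hHull : convexHull ℝ Sset = Q :=
    le_antisymm (convexHull_min hSsubQ hconvQ) hQsubHull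
  -- ## Step 9: recession directions and basic members
  have h0S : (fun _ => (0:ℝ)) ∈ Sset := by
    rw [hmemS]
    refine ⟨fun j => le_refl 0, fun i => ?_, fun j => ⟨0, by norm_num⟩⟩
    have : ∑ j, signedRow A Jp i j * (0:ℝ) = 0 := by simp
    rw [this]
    exact_mod_cast hb i
  have hδstep : ∀ j0 ∈ Jn, ∀ s ∈ Sset, s + (fun j => if j = j0 then (1:ℝ) else 0) ∈ Sset := by
    intro j0 hj0 s hs
    rw [hmemS] at hs ⊢
    obtain ⟨h1, h2, h3⟩ := hs
    refine ⟨fun j => ?_, fun i => ?_, fun j => ?_⟩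
    · rw [Pi.add_apply]
      have := h1 j
      split <;> linarith
    · have hadd : ∑ j, signedRow A Jp i j * (s + fun j => if j = j0 then (1:ℝ) else 0) j =
          (∑ j, signedRow A Jp i j * s j) + signedRow A Jp i j0 := by
        rw [show (∑ j, signedRow A Jp i j * (s + fun j => if j = j0 then (1:ℝ) else 0) j)
            = ∑ j, (signedRow A Jp i j * s j + (if j = j0 then signedRow A Jp i j else 0)) from
          Finset.sum_congr rfl (fun j _ => by rw [Pi.add_apply]; split <;> ring)]
        rw [Finset.sum_add_distrib, Finset.sum_ite_eq' Finset.univ j0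
          (fun j => signedRow A Jp i j)]
        simp
      rw [hadd]
      have hneg : signedRow A Jp i j0 ≤ 0 := by
        rw [signedRow, if_neg (hnotp j0 hj0)]
        have : (0:ℝ) ≤ ((A i j0 : ℚ) : ℝ) := by exact_mod_cast hA i j0
        linarith
      linarith [h2 i]
    · obtain ⟨z, hz⟩ := h3 j
      rw [Pi.add_apply]
      by_cases hjj : j = j0
      · exact ⟨z + 1, by rw [if_pos hjj, hz]; push_cast; ring⟩
      · exact ⟨z, by rw [if_neg hjj, hz]; ring⟩
  have h0Q : ∀ i : Fin K, 0 ≤ dQ i := by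
    intro i
    have h0 : (fun _ => (0:ℝ)) ∈ Q := hSsubQ h0S
    rw [hQeq] at h0
    have := h0 i
    simpa using this
  have hrec : ∀ (i : Fin K), ∀ j0 ∈ Jn, cQ i j0 ≤ 0 := by
    intro i j0 hj0
    by_contra hpos
    push_neg at hpos
    set t := (dQ i + 1) / cQ i j0 with ht
    have ht0 : 0 ≤ t := by
      apply div_nonneg
      · linarith [h0Q i]
      · linarith
    set δf : Fin n → ℝ := fun j => if j = j0 then (1:ℝ) else 0 with hδf
    set z0 : Fin n → ℝ := fun _ => (0:ℝ) with hz0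
    have hz0S : z0 ∈ Sset := h0S
    have hpt : z0 + t • δf ∈ convexHull ℝ Sset :=
      convexHull_add_ray (by
        intro s hs
        have := hδstep j0 hj0 s hs
        convert this using 2) t ht0 _ (subset_convexHull ℝ Sset hz0S)
    rw [hHull, hQeq] at hpt
    have hrow := hpt i
    have hval : ∀ j, (z0 + t • δf) j = if j = j0 then t else 0 := by
      intro j
      rw [Pi.add_apply, Pi.smul_apply, smul_eq_mul, hz0, hδf]
      simp only
      split <;> simp
    have hsum2 : ∑ j, cQ i j * (z0 + t • δf) j = t * cQ i j0 := by
      rw [Finset.sum_congr rfl (fun j _ => by rw [hval j])]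
      rw [Finset.sum_congr rfl (fun j _ => show cQ i j * (if j = j0 then t else 0)
          = if j = j0 then t * cQ i j else 0 from by split <;> ring)]
      rw [Finset.sum_ite_eq' Finset.univ j0 (fun j => t * cQ i j)]
      simp
    rw [hsum2, ht] at hrow
    rw [div_mul_cancel₀ _ (ne_of_gt hpos)] at hrow
    linarith
  -- ## Step 10: clipping to the sign pattern
  have hvalid : ∀ (i : Fin K), ∀ s ∈ Sset,
      ∑ j, (if j ∈ Jp then max (cQ i j) 0 else cQ i j) * s j ≤ dQ i := by
    intro i s hs
    rw [hmemS] at hs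
    obtain ⟨h1, h2, h3⟩ := hs
    set s' : Fin n → ℝ := fun j => if j ∈ Jp then (if cQ i j < 0 then 0 else s j) else s j with hs'
    have hs'S : s' ∈ Sset := by
      rw [hmemS]
      refine ⟨fun j => ?_, fun i' => ?_, fun j => ?_⟩
      · rw [hs']
        simp only
        split
        · split
          · exact le_refl 0
          · exact h1 j
        · exact h1 j
      · have hle : ∑ j, signedRow A Jp i' j * s' j ≤ ∑ j, signedRow A Jp i' j * s j := by
          apply Finset.sum_le_sum
          intro j _
          rw [hs']
          simp only
          by_cases hjp : j ∈ Jp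
          · rw [if_pos hjp]
            by_cases hcn : cQ i j < 0
            · rw [if_pos hcn, mul_zero]
              have hApos : (0:ℝ) ≤ signedRow A Jp i' j := by
                rw [signedRow, if_pos hjp]
                exact_mod_cast hA i' j
              exact mul_nonneg hApos (h1 j)
            · rw [if_neg hcn]
          · rw [if_neg hjp]
        exact le_trans hle (h2 i')
      · rw [hs']
        simp only
        by_cases hjp : j ∈ Jp
        · rw [if_pos hjp]
          by_cases hcn : cQ i j < 0
          · exact ⟨0, by rw [if_pos hcn]; norm_num⟩
          · rw [if_neg hcn]; exact h3 j
        · rw [if_neg hjp]; exact h3 j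
    have hsum : ∑ j, (if j ∈ Jp then max (cQ i j) 0 else cQ i j) * s j =
        ∑ j, cQ i j * s' j := by
      apply Finset.sum_congr rfl
      intro j _
      rw [hs']
      simp only
      by_cases hjp : j ∈ Jp
      · rw [if_pos hjp, if_pos hjp]
        by_cases hcn : cQ i j < 0
        · rw [if_pos hcn, max_eq_right (le_of_lt hcn), mul_zero, zero_mul]
        · rw [if_neg hcn, max_eq_left (not_lt.1 hcn)]
      · rw [if_neg hjp, if_neg hjp]
    rw [hsum]
    have : s' ∈ Q := hSsubQ hs'S
    rw [hQeq] at this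
    exact this i
  -- ## Final assembly
  refine ⟨K, fun i j => if j ∈ Jp then max (cQ i j) 0 else cQ i j, dQ, fun i => ⟨?_, ?_⟩, ?_⟩
  · intro j hj
    show (0:ℝ) ≤ if j ∈ Jp then max (cQ i j) 0 else cQ i j
    rw [if_pos hj]
    exact le_max_right _ _
  · intro j hj
    show (if j ∈ Jp then max (cQ i j) 0 else cQ i j) ≤ 0
    rw [if_neg (hnotp j hj)]
    exact hrec i j hj
  · ext x
    constructor
    · intro hx
      constructor
      · exact convexHull_subset_orthant (fun s hs j => ((hmemS s).1 hs).1 j) hx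
      · intro i
        show ∑ j, (if j ∈ Jp then max (cQ i j) 0 else cQ i j) * x j ≤ dQ i
        exact convexHull_subset_halfspace (hvalid i) hx
    · rintro ⟨hx0, hxr⟩
      rw [hHull, hQeq]
      intro i
      have hle : ∑ j, cQ i j * x j ≤ ∑ j, (if j ∈ Jp then max (cQ i j) 0 else cQ i j) * x j := by
        apply Finset.sum_le_sum
        intro j _
        by_cases hjp : j ∈ Jp
        · rw [if_pos hjp]
          exact mul_le_mul_of_nonneg_right (le_max_left _ _) (hx0 j)
        · rw [if_neg hjp]
      refine le_trans hle (le_trans (le_of_eq ?_) (hxr i))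
      rfl
end

section
/- Let P be a (J⁺,J⁻) sign-pattern polyhedron in ℝⁿ defined by a single non-trivial constraint with rational data, i.e., P = {x ∈ ℝⁿ_+ : Σ_{j∈J⁺} a_j x_j − Σ_{j∈J⁻} a_j x_j ≤ b} with rational a_j ≥ 0, b ≥ 0, and a_j ≤ b for j ∈ J⁺. Then P ⊆ 2·P^I, where P^I := conv(P ∩ ℤⁿ). -/
open scoped Pointwise

/-- The sign-pattern polyhedron defined by a single non-trivial rational constraint
`Σ_{j∈J⁺} a_j x_j − Σ_{j∈J⁻} a_j x_j ≤ b` together with `x ≥ 0`. -/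
def oneRowPolyQ {n : ℕ} (Jp Jn : Finset (Fin n)) (a : Fin n → ℚ) (b : ℚ) :
    Set (Fin n → ℝ) :=
  {x | (∀ j, 0 ≤ x j) ∧ ∑ j ∈ Jp, (a j : ℝ) * x j - ∑ j ∈ Jn, (a j : ℝ) * x j ≤ (b : ℝ)}

namespace OneRowAux

variable {n : ℕ}

def L (Jp Jn : Finset (Fin n)) (a : Fin n → ℚ) (v : Fin n → ℝ) : ℝ :=
  ∑ j ∈ Jp, (a j : ℝ) * v j - ∑ j ∈ Jn, (a j : ℝ) * v j

lemma L_add (Jp Jn : Finset (Fin n)) (a : Fin n → ℚ) (v w : Fin n → ℝ) :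
    L Jp Jn a (v + w) = L Jp Jn a v + L Jp Jn a w := by
  simp only [L, Pi.add_apply, mul_add, Finset.sum_add_distrib]; ring

lemma L_smul (Jp Jn : Finset (Fin n)) (a : Fin n → ℚ) (r : ℝ) (v : Fin n → ℝ) :
    L Jp Jn a (r • v) = r * L Jp Jn a v := by
  simp only [L, Pi.smul_apply, smul_eq_mul, mul_sub, Finset.mul_sum]
  congr 1 <;> exact Finset.sum_congr rfl (fun j _ => by ring)

lemma L_single (Jp Jn : Finset (Fin n)) (a : Fin n → ℚ) (j : Fin n) (r : ℝ) :
    L Jp Jn a (fun i => if i = j then r else 0)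
      = ((if j ∈ Jp then (a j : ℝ) else 0) - (if j ∈ Jn then (a j : ℝ) else 0)) * r := by
  simp only [L, mul_ite, mul_zero, Finset.sum_ite_eq']
  split_ifs <;> ring

lemma zero_mem_PI (Jp Jn : Finset (Fin n)) (a : Fin n → ℚ) (b : ℚ) (hb : 0 ≤ b) :
    (0 : Fin n → ℝ) ∈ {x ∈ oneRowPolyQ Jp Jn a b | ∀ j, ∃ z : ℤ, x j = (z : ℝ)} := by
  refine ⟨⟨fun j => le_refl 0, ?_⟩, fun j => ⟨0, by simp⟩⟩
  simp only [Pi.zero_apply, mul_zero, Finset.sum_const_zero, sub_zero]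
  exact_mod_cast hb

/-- Adding a nonnegative multiple of a nonnegative integer recession direction
keeps us in the convex hull of integer points. -/
lemma add_ray (Jp Jn : Finset (Fin n)) (a : Fin n → ℚ) (b : ℚ)
    (d : Fin n → ℝ) (hdi : ∀ j, ∃ z : ℤ, d j = (z : ℝ)) (hd0 : ∀ j, 0 ≤ d j)
    (hdL : L Jp Jn a d ≤ 0) (ρ : ℝ) (hρ : 0 ≤ ρ) :
    ∀ x ∈ convexHull ℝ {x ∈ oneRowPolyQ Jp Jn a b | ∀ j, ∃ z : ℤ, x j = (z : ℝ)},
      x + ρ • d ∈ convexHull ℝ {x ∈ oneRowPolyQ Jp Jn a b | ∀ j, ∃ z : ℤ, x j = (z : ℝ)} := by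
  set PI := {x ∈ oneRowPolyQ Jp Jn a b | ∀ j, ∃ z : ℤ, x j = (z : ℝ)} with hPI
  set K := convexHull ℝ PI with hK
  have hKconv : Convex ℝ K := convex_convexHull ℝ PI
  have key : ∀ w ∈ PI, w + ρ • d ∈ K := by
    intro w hw
    obtain ⟨⟨hw0, hwL⟩, hwi⟩ := hw
    have hwL' : L Jp Jn a w ≤ (b : ℝ) := hwL
    have hmem : ∀ m : ℤ, 0 ≤ m → w + (m : ℝ) • d ∈ PI := by
      intro m hm
      have hm' : (0:ℝ) ≤ (m:ℝ) := by exact_mod_cast hm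
      refine ⟨⟨fun j => ?_, ?_⟩, fun j => ?_⟩
      · exact add_nonneg (hw0 j) (mul_nonneg hm' (hd0 j))
      · show L Jp Jn a (w + (m:ℝ) • d) ≤ (b:ℝ)
        rw [L_add, L_smul]
        nlinarith
      · obtain ⟨zw, hzw⟩ := hwi j
        obtain ⟨zd, hzd⟩ := hdi j
        refine ⟨zw + m * zd, ?_⟩
        show w j + (m:ℝ) * d j = _
        rw [hzw, hzd]; push_cast; ring
    have hfl : (0:ℤ) ≤ ⌊ρ⌋ := Int.floor_nonneg.2 hρ
    have h1 : w + (⌊ρ⌋ : ℝ) • d ∈ K := subset_convexHull ℝ PI (hmem ⌊ρ⌋ hfl)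
    have h2 : w + ((⌊ρ⌋ : ℤ) + 1 : ℝ) • d ∈ K := by
      have := hmem (⌊ρ⌋ + 1) (by omega)
      have h' : (((⌊ρ⌋ + 1 : ℤ)) : ℝ) = ((⌊ρ⌋ : ℤ) : ℝ) + 1 := by push_cast; ring
      rw [h'] at this
      exact subset_convexHull ℝ PI this
    have heq : w + ρ • d =
        (1 - Int.fract ρ) • (w + (⌊ρ⌋ : ℝ) • d) + Int.fract ρ • (w + ((⌊ρ⌋ : ℤ) + 1 : ℝ) • d) := by
      funext i
      simp only [Pi.add_apply, Pi.smul_apply, smul_eq_mul, Int.fract]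
      ring
    rw [heq]
    exact hKconv h1 h2 (by linarith [Int.fract_lt_one ρ]) (Int.fract_nonneg ρ) (by ring)
  intro x hx
  have hsub : K ⊆ {x | x + ρ • d ∈ K} := by
    apply convexHull_min key
    intro u hu v hv p q hp hq hpq
    have : (p • u + q • v) + ρ • d = p • (u + ρ • d) + q • (v + ρ • d) := by
      funext i
      simp only [Pi.add_apply, Pi.smul_apply, smul_eq_mul]
      linear_combination (-(ρ * d i)) * hpq
    show (p • u + q • v) + ρ • d ∈ K
    rw [this]
    exact hKconv hu hv hp hq hpq
  exact hsub hx

lemma add_rays {ι : Type*} (Jp Jn : Finset (Fin n)) (a : Fin n → ℚ) (b : ℚ)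
    (s : Finset ι) (ρ : ι → ℝ) (d : ι → Fin n → ℝ)
    (h : ∀ i ∈ s, ρ i = 0 ∨ (0 ≤ ρ i ∧ (∀ j, ∃ z : ℤ, d i j = (z : ℝ)) ∧
      (∀ j, 0 ≤ d i j) ∧ L Jp Jn a (d i) ≤ 0)) :
    ∀ x ∈ convexHull ℝ {x ∈ oneRowPolyQ Jp Jn a b | ∀ j, ∃ z : ℤ, x j = (z : ℝ)},
      x + ∑ i ∈ s, ρ i • d i ∈
        convexHull ℝ {x ∈ oneRowPolyQ Jp Jn a b | ∀ j, ∃ z : ℤ, x j = (z : ℝ)} := by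
  induction s using Finset.cons_induction with
  | empty => intro x hx; simpa using hx
  | cons i s his ih =>
    intro x hx
    rw [Finset.sum_cons]
    have hx' := ih (fun i hi => h i (Finset.mem_cons_of_mem hi)) x hx
    rcases h i (Finset.mem_cons_self i s) with h0 | ⟨hρ, hdi, hd0, hdL⟩
    · have : x + (ρ i • d i + ∑ j ∈ s, ρ j • d j) = (x + ∑ j ∈ s, ρ j • d j) := by
        rw [h0]; funext k; simp
      rw [this]; exact hx'
    · have : x + (ρ i • d i + ∑ j ∈ s, ρ j • d j)
          = (x + ∑ j ∈ s, ρ j • d j) + ρ i • d i := by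
        funext k; simp; ring
      rw [this]
      exact add_ray Jp Jn a b (d i) hdi hd0 hdL (ρ i) hρ _ hx'


end OneRowAux

namespace OneRowAux

lemma main_aux {n : ℕ} (Jp Jn : Finset (Fin n)) (hdisj : Disjoint Jp Jn)
    (hunion : Jp ∪ Jn = Finset.univ)
    (a : Fin n → ℚ) (ha : ∀ j, 0 ≤ a j) (b : ℚ) (hb : 0 ≤ b) (hab : ∀ j ∈ Jp, a j ≤ b)
    (y : Fin n → ℝ) (hy0 : ∀ j, 0 ≤ y j) (hyL : L Jp Jn a y ≤ (b : ℝ) / 2) :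
    y ∈ convexHull ℝ {x ∈ oneRowPolyQ Jp Jn a b | ∀ j, ∃ z : ℤ, x j = (z : ℝ)} := by
  classical
  set PI := {x ∈ oneRowPolyQ Jp Jn a b | ∀ j, ∃ z : ℤ, x j = (z : ℝ)} with hPIdef
  set K := convexHull ℝ PI with hKdef
  have h0PI : (0 : Fin n → ℝ) ∈ PI := zero_mem_PI Jp Jn a b hb
  have h0K : (0 : Fin n → ℝ) ∈ K := subset_convexHull ℝ PI h0PI
  set B : ℝ := (b : ℝ) / 2 with hBdef
  have hB0 : 0 ≤ B := by
    rw [hBdef]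
    have : (0:ℝ) ≤ (b:ℝ) := by exact_mod_cast hb
    linarith
  set Pp : ℝ := ∑ j ∈ Jp, (a j : ℝ) * y j with hPpdef
  set N : ℝ := ∑ j ∈ Jn, (a j : ℝ) * y j with hNdef
  have hPp0 : 0 ≤ Pp :=
    Finset.sum_nonneg fun j _ => mul_nonneg (by exact_mod_cast ha j) (hy0 j)
  have hN0 : 0 ≤ N :=
    Finset.sum_nonneg fun j _ => mul_nonneg (by exact_mod_cast ha j) (hy0 j)
  have hPN : Pp - N ≤ B := hyL
  -- the scaling factor t
  set t : ℝ := if Pp ≤ B then 1 else B / Pp with htdef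
  have ht0 : 0 ≤ t := by
    rw [htdef]; split_ifs
    · norm_num
    · exact div_nonneg hB0 hPp0
  have ht1 : t ≤ 1 := by
    rw [htdef]; split_ifs with h
    · exact le_refl 1
    · have hBP : B < Pp := not_le.1 h
      have hPpPos : 0 < Pp := lt_of_le_of_lt hB0 hBP
      rw [div_le_one hPpPos]; exact le_of_lt hBP
  have htPp : t * Pp ≤ B := by
    rw [htdef]; split_ifs with h
    · simpa using h
    · have hPpne : Pp ≠ 0 := by
        intro h0; rw [h0] at h; exact h hB0
      rw [div_mul_cancel₀ _ hPpne]
  have htEx : (1 - t) * Pp ≤ N := by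
    rw [htdef]; split_ifs with h
    · simpa using hN0
    · have hPpne : Pp ≠ 0 := by
        intro h0; rw [h0] at h; exact h hB0
      have : (1 - B / Pp) * Pp = Pp - B := by field_simp
      rw [this]; linarith
  have htN : N = 0 → t = 1 := by
    intro hN
    rw [htdef, if_pos (by linarith)]
  -- the support of the point part
  set S : Finset (Fin n) := Jp.filter (fun j => 0 < a j) with hSdef
  have hSsub : S ⊆ Jp := Finset.filter_subset _ _
  have haS : ∀ j ∈ S, 0 < a j := fun j hj => (Finset.mem_filter.1 hj).2
  have hSJn : ∀ j ∈ S, j ∉ Jn := fun j hj =>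
    Finset.disjoint_left.1 hdisj (hSsub hj)
  have hPpS : ∑ j ∈ S, (a j : ℝ) * y j = Pp := by
    rw [hPpdef]
    refine Finset.sum_subset hSsub (fun j hj hnj => ?_)
    have h1 : ¬ 0 < a j := fun hc => hnj (Finset.mem_filter.2 ⟨hj, hc⟩)
    have h2 : a j = 0 := le_antisymm (not_lt.1 h1) (ha j)
    rw [h2]; simp
  set c : Fin n → ℤ := fun j => ⌊b / a j⌋ with hcdef
  have hc1 : ∀ j ∈ S, 1 ≤ c j := by
    intro j hj
    rw [hcdef]
    refine Int.le_floor.2 ?_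
    rw [Int.cast_one, le_div_iff₀ (haS j hj), one_mul]
    exact hab j (hSsub hj)
  have hcb : ∀ j ∈ S, (a j : ℚ) * (c j : ℚ) ≤ b := by
    intro j hj
    have h1 : ((c j : ℤ) : ℚ) ≤ b / a j := Int.floor_le _
    calc (a j : ℚ) * (c j : ℚ) ≤ a j * (b / a j) :=
          mul_le_mul_of_nonneg_left h1 (ha j)
      _ = b := mul_div_cancel₀ b (ne_of_gt (haS j hj))
  have hchalf : ∀ j ∈ S, (b : ℚ) / 2 ≤ a j * (c j : ℚ) := by
    intro j hj
    have hu1 : (1 : ℚ) ≤ b / a j := by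
      rw [le_div_iff₀ (haS j hj), one_mul]; exact hab j (hSsub hj)
    have hhalf : (b / a j) / 2 ≤ ((c j : ℤ) : ℚ) := by
      rcases le_or_gt (b / a j) 2 with h | h
      · have : (1 : ℚ) ≤ ((c j : ℤ) : ℚ) := by exact_mod_cast hc1 j hj
        linarith
      · have := Int.sub_one_lt_floor (b / a j)
        have hc' : b / a j - 1 < ((c j : ℤ) : ℚ) := by rw [hcdef]; exact this
        linarith
    have haj : (0 : ℚ) < a j := haS j hj
    have hb' : a j * (b / a j) = b := mul_div_cancel₀ b (ne_of_gt haj)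
    nlinarith [mul_le_mul_of_nonneg_left hhalf (le_of_lt haj)]
  -- point part
  set lam : Fin n → ℝ := fun j => t * y j / ((c j : ℤ) : ℝ) with hlamdef
  have hlam0 : ∀ j ∈ S, 0 ≤ lam j := by
    intro j hj
    have : (0:ℝ) ≤ ((c j : ℤ) : ℝ) := by
      have := hc1 j hj; exact_mod_cast le_trans zero_le_one (by exact_mod_cast this)
    exact div_nonneg (mul_nonneg ht0 (hy0 j)) this
  have hlamsum : ∑ j ∈ S, lam j ≤ 1 := by
    rcases eq_or_lt_of_le hb with hb0 | hbpos
    · have hSempty : S = ∅ := by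
        refine Finset.eq_empty_of_forall_notMem (fun j hj => ?_)
        have := lt_of_lt_of_le (haS j hj) (hab j (hSsub hj))
        rw [← hb0] at this; exact lt_irrefl 0 this
      rw [hSempty]; simp
    · have hbR : (0:ℝ) < (b:ℝ) := by exact_mod_cast hbpos
      have key : ∀ j ∈ S, lam j ≤ 2 / (b:ℝ) * ((a j : ℝ) * (t * y j)) := by
        intro j hj
        have hcR : (0:ℝ) < ((c j : ℤ) : ℝ) := by
          have := hc1 j hj
          exact_mod_cast lt_of_lt_of_le zero_lt_one (by exact_mod_cast this)
        have hhalfR : (b:ℝ)/2 ≤ (a j : ℝ) * ((c j : ℤ) : ℝ) := by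
          have := hchalf j hj; exact_mod_cast this
        have hty : 0 ≤ t * y j := mul_nonneg ht0 (hy0 j)
        have h1 : (b:ℝ) ≤ 2 * ((a j : ℝ) * ((c j : ℤ) : ℝ)) := by linarith
        rw [hlamdef]
        dsimp only
        rw [div_le_iff₀ hcR]
        have h2 := mul_le_mul_of_nonneg_left h1 hty
        have h3 : 2 / (b:ℝ) * ((a j : ℝ) * (t * y j)) * ((c j : ℤ) : ℝ)
            = 2 * ((a j : ℝ) * (t * y j)) * ((c j : ℤ) : ℝ) / (b:ℝ) := by ring
        rw [h3, le_div_iff₀ hbR]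
        nlinarith [h2]
      calc ∑ j ∈ S, lam j ≤ ∑ j ∈ S, 2 / (b:ℝ) * ((a j : ℝ) * (t * y j)) :=
            Finset.sum_le_sum key
        _ = 2 * t / (b:ℝ) * ∑ j ∈ S, (a j : ℝ) * y j := by
            rw [Finset.mul_sum]
            exact Finset.sum_congr rfl (fun j _ => by ring)
        _ = 2 * t / (b:ℝ) * Pp := by rw [hPpS]
        _ ≤ 1 := by
            rw [div_mul_eq_mul_div, div_le_one hbR]
            have : 2 * (t * Pp) ≤ 2 * B := by linarith
            calc 2 * t * Pp = 2 * (t * Pp) := by ring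
              _ ≤ 2 * B := this
              _ = (b:ℝ) := by rw [hBdef]; ring
  set zvec : Fin n → (Fin n → ℝ) := fun j => fun i => if i = j then ((c j : ℤ) : ℝ) else 0
    with hzvecdef
  have hzPI : ∀ j ∈ S, zvec j ∈ PI := by
    intro j hj
    have hcR : (0:ℝ) ≤ ((c j : ℤ) : ℝ) := by
      have := hc1 j hj
      exact_mod_cast le_trans zero_le_one (by exact_mod_cast this)
    refine ⟨⟨fun i => ?_, ?_⟩, fun i => ?_⟩
    · rw [hzvecdef]; dsimp only; split_ifs <;> simp [hcR]
    · show L Jp Jn a (zvec j) ≤ (b:ℝ)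
      rw [hzvecdef]
      rw [L_single Jp Jn a j ((c j : ℤ) : ℝ)]
      rw [if_pos (hSsub hj), if_neg (hSJn j hj)]
      have := hcb j hj
      have h2 : (a j : ℝ) * ((c j : ℤ) : ℝ) ≤ (b:ℝ) := by exact_mod_cast this
      linarith [h2]
    · refine ⟨if i = j then c j else 0, ?_⟩
      rw [hzvecdef]; dsimp only; split_ifs <;> simp
  set p : Fin n → ℝ := ∑ j ∈ S, lam j • zvec j with hpdef
  have hpK : p ∈ K := by
    set W : ℝ := ∑ j ∈ S, lam j with hWdef
    have hW0 : 0 ≤ W := Finset.sum_nonneg hlam0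
    rcases eq_or_lt_of_le hW0 with hWz | hWpos
    · have hall : ∀ j ∈ S, lam j = 0 :=
        (Finset.sum_eq_zero_iff_of_nonneg hlam0).1 hWz.symm
      have : p = 0 := by
        rw [hpdef]
        exact Finset.sum_eq_zero (fun j hj => by rw [hall j hj, zero_smul])
      rw [this]; exact h0K
    · have hcm : S.centerMass lam zvec ∈ K :=
        Finset.centerMass_mem_convexHull S hlam0 hWpos hzPI
      have hpe : p = W • S.centerMass lam zvec + (1 - W) • (0 : Fin n → ℝ) := by
        rw [Finset.centerMass, smul_smul, mul_inv_cancel₀ (ne_of_gt hWpos), one_smul]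
        simp [hpdef]
      rw [hpe]
      exact (convex_convexHull ℝ PI) hcm h0K (le_of_lt hWpos) (by linarith [hlamsum])
        (by ring)
  -- the compensation ratio
  set sV : ℝ := if N = 0 then 0 else (1 - t) * Pp / N with hsVdef
  have hsV0 : 0 ≤ sV := by
    rw [hsVdef]; split_ifs with h
    · exact le_refl 0
    · exact div_nonneg (mul_nonneg (by linarith) hPp0) hN0
  have hsV1 : sV ≤ 1 := by
    rw [hsVdef]; split_ifs with h
    · norm_num
    · have hNpos : 0 < N := lt_of_le_of_ne hN0 (Ne.symm h)
      rw [div_le_one hNpos]; exact htEx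
  have hsVN : sV * N = (1 - t) * Pp := by
    rw [hsVdef]; split_ifs with h
    · rw [h, mul_zero, htN h]; ring
    · rw [div_mul_cancel₀ _ h]
  -- single-coordinate rays
  set sgl : Fin n → (Fin n → ℝ) := fun j => fun i => if i = j then (1:ℝ) else 0 with hsgldef
  set gam : Fin n → ℝ := fun j => if j ∈ Jn then (1 - sV) * y j else if a j = 0 then y j else 0
    with hgamdef
  have hgamvalid : ∀ j ∈ (Finset.univ : Finset (Fin n)), gam j = 0 ∨ (0 ≤ gam j ∧
      (∀ i, ∃ z : ℤ, sgl j i = (z : ℝ)) ∧ (∀ i, 0 ≤ sgl j i) ∧ L Jp Jn a (sgl j) ≤ 0) := by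
    intro j _
    have hint : ∀ i, ∃ z : ℤ, sgl j i = (z:ℝ) := fun i =>
      ⟨if i = j then 1 else 0, by rw [hsgldef]; dsimp only; split_ifs <;> simp⟩
    have hpos : ∀ i, 0 ≤ sgl j i := fun i => by
      rw [hsgldef]; dsimp only; split_ifs <;> norm_num
    by_cases hjn : j ∈ Jn
    · right
      have hgj : gam j = (1 - sV) * y j := by rw [hgamdef]; dsimp only; rw [if_pos hjn]
      have hjp : j ∉ Jp := Finset.disjoint_right.1 hdisj hjn
      refine ⟨by rw [hgj]; exact mul_nonneg (by linarith) (hy0 j), hint, hpos, ?_⟩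
      rw [hsgldef]
      rw [L_single Jp Jn a j 1, if_neg hjp, if_pos hjn]
      have : (0:ℝ) ≤ (a j : ℝ) := by exact_mod_cast ha j
      linarith
    · by_cases haj : a j = 0
      · right
        have hgj : gam j = y j := by
          rw [hgamdef]; dsimp only; rw [if_neg hjn, if_pos haj]
        refine ⟨by rw [hgj]; exact hy0 j, hint, hpos, ?_⟩
        rw [hsgldef, L_single Jp Jn a j 1]
        have h0 : (a j : ℝ) = 0 := by exact_mod_cast haj
        split_ifs <;> simp [h0]
      · left
        rw [hgamdef]; dsimp only; rw [if_neg hjn, if_neg haj]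
  -- pair rays
  set mm : Fin n → Fin n → ℚ := fun j k => ((a j).den : ℚ) * ((a k).den : ℚ) with hmdef
  have hmpos : ∀ j k, (0:ℚ) < mm j k := fun j k => by
    rw [hmdef]
    exact mul_pos (by exact_mod_cast (a j).pos) (by exact_mod_cast (a k).pos)
  have hmR : ∀ j k, (0:ℝ) < ((mm j k : ℚ) : ℝ) := fun j k => by exact_mod_cast hmpos j k
  have hE1 : ∀ j k, (a k) * mm j k = (((a k).num * (a j).den : ℤ) : ℚ) := by
    intro j k
    rw [hmdef]
    calc a k * (((a j).den : ℚ) * ((a k).den : ℚ))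
        = (a k * ((a k).den : ℚ)) * ((a j).den : ℚ) := by ring
      _ = ((a k).num : ℚ) * ((a j).den : ℚ) := by rw [Rat.mul_den_eq_num]
      _ = (((a k).num * (a j).den : ℤ) : ℚ) := by push_cast; ring
  have hE2 : ∀ j k, (a j) * mm j k = (((a j).num * (a k).den : ℤ) : ℚ) := by
    intro j k
    rw [hmdef]
    calc a j * (((a j).den : ℚ) * ((a k).den : ℚ))
        = (a j * ((a j).den : ℚ)) * ((a k).den : ℚ) := by ring
      _ = ((a j).num : ℚ) * ((a k).den : ℚ) := by rw [Rat.mul_den_eq_num]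
      _ = (((a j).num * (a k).den : ℤ) : ℚ) := by push_cast; ring
  set dd : Fin n × Fin n → (Fin n → ℝ) := fun q => fun i =>
    if i = q.1 then ((a q.2 * mm q.1 q.2 : ℚ) : ℝ)
    else if i = q.2 then ((a q.1 * mm q.1 q.2 : ℚ) : ℝ) else 0 with hdddef
  set rp : Fin n × Fin n → ℝ := fun q =>
    if q.1 ∈ S ∧ q.2 ∈ Jn then (1 - t) * y q.1 * y q.2 / (N * ((mm q.1 q.2 : ℚ) : ℝ)) else 0
    with hrpdef
  have hrp0 : ∀ q, 0 ≤ rp q := by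
    intro q; rw [hrpdef]; dsimp only; split_ifs with h
    · apply div_nonneg
      · exact mul_nonneg (mul_nonneg (by linarith) (hy0 _)) (hy0 _)
      · exact mul_nonneg hN0 (le_of_lt (hmR _ _))
    · exact le_refl 0
  have hddvalid : ∀ q ∈ (Finset.univ ×ˢ Finset.univ : Finset (Fin n × Fin n)),
      rp q = 0 ∨ (0 ≤ rp q ∧ (∀ i, ∃ z : ℤ, dd q i = (z:ℝ)) ∧ (∀ i, 0 ≤ dd q i) ∧
        L Jp Jn a (dd q) ≤ 0) := by
    intro q _
    by_cases hq : q.1 ∈ S ∧ q.2 ∈ Jn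
    · right
      obtain ⟨hq1, hq2⟩ := hq
      have hq1p : q.1 ∈ Jp := hSsub hq1
      have hne : q.1 ≠ q.2 := fun h => (hSJn q.1 hq1) (h ▸ hq2)
      have haq1 : (0:ℝ) ≤ ((a q.1 * mm q.1 q.2 : ℚ):ℝ) := by
        have : (0:ℚ) ≤ a q.1 * mm q.1 q.2 := mul_nonneg (ha _) (le_of_lt (hmpos _ _))
        exact_mod_cast this
      have haq2 : (0:ℝ) ≤ ((a q.2 * mm q.1 q.2 : ℚ):ℝ) := by
        have : (0:ℚ) ≤ a q.2 * mm q.1 q.2 := mul_nonneg (ha _) (le_of_lt (hmpos _ _))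
        exact_mod_cast this
      refine ⟨hrp0 q, fun i => ?_, fun i => ?_, ?_⟩
      · refine ⟨if i = q.1 then (a q.2).num * (a q.1).den
          else if i = q.2 then (a q.1).num * (a q.2).den else 0, ?_⟩
        rw [hdddef]; dsimp only
        split_ifs
        · rw [hE1]; norm_cast
        · rw [hE2]; norm_cast
        · norm_num
      · rw [hdddef]; dsimp only
        split_ifs
        exacts [haq2, haq1, le_refl 0]
      · have hsplit : dd q
            = ((a q.2 * mm q.1 q.2 : ℚ):ℝ) • (fun i => if i = q.1 then (1:ℝ) else 0)
              + ((a q.1 * mm q.1 q.2 : ℚ):ℝ) • (fun i => if i = q.2 then (1:ℝ) else 0) := by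
          funext i
          rw [hdddef]; dsimp only [Pi.add_apply, Pi.smul_apply, smul_eq_mul]
          by_cases h1 : i = q.1
          · have h2 : i ≠ q.2 := h1 ▸ hne
            rw [if_pos h1, if_pos h1, if_neg h2]; ring
          · rw [if_neg h1, if_neg h1]
            by_cases h2 : i = q.2
            · rw [if_pos h2, if_pos h2]; ring
            · rw [if_neg h2, if_neg h2]; ring
        rw [hsplit, L_add, L_smul, L_smul, L_single, L_single]
        rw [if_pos hq1p, if_neg (hSJn q.1 hq1),
          if_neg (Finset.disjoint_right.1 hdisj hq2), if_pos hq2]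
        apply le_of_eq
        push_cast
        ring
    · left
      rw [hrpdef]; dsimp only; rw [if_neg hq]
  -- the marginal sums
  have hR1 : ∀ i : Fin n,
      (∑ k : Fin n, rp (i, k) * ((a k * mm i k : ℚ) : ℝ))
        = if i ∈ S then (1 - t) * y i else 0 := by
    intro i
    by_cases hiS : i ∈ S
    · rw [if_pos hiS]
      by_cases hN : N = 0
      · have ht1' : t = 1 := htN hN
        have hz : ∀ k ∈ (Finset.univ : Finset (Fin n)),
            rp (i,k) * ((a k * mm i k:ℚ):ℝ) = 0 := by
          intro k _
          rw [hrpdef]; dsimp only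
          split_ifs with h
          · rw [ht1']; norm_num
          · exact zero_mul _
        rw [Finset.sum_congr rfl hz, Finset.sum_const_zero, ht1']
        norm_num
      · have hterm : ∀ k ∈ (Finset.univ : Finset (Fin n)),
            rp (i,k) * ((a k * mm i k : ℚ):ℝ)
              = if k ∈ Jn then (1-t) * y i / N * ((a k:ℝ) * y k) else 0 := by
          intro k _
          rw [hrpdef]; dsimp only
          by_cases hk : k ∈ Jn
          · rw [if_pos ⟨hiS, hk⟩, if_pos hk]
            have hmne : ((mm i k:ℚ):ℝ) ≠ 0 := ne_of_gt (hmR i k)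
            have hcast : ((a k * mm i k:ℚ):ℝ) = (a k:ℝ) * ((mm i k:ℚ):ℝ) := by push_cast; ring
            rw [hcast]
            field_simp
          · rw [if_neg (by tauto), if_neg hk, zero_mul]
        rw [Finset.sum_congr rfl hterm, Finset.sum_ite_mem, Finset.univ_inter,
          ← Finset.mul_sum, ← hNdef]
        field_simp
    · rw [if_neg hiS]
      refine Finset.sum_eq_zero (fun k _ => ?_)
      rw [hrpdef]; dsimp only; rw [if_neg (by tauto), zero_mul]
  have hR2 : ∀ i : Fin n,
      (∑ j : Fin n, rp (j, i) * ((a j * mm j i : ℚ) : ℝ))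
        = if i ∈ Jn then sV * y i else 0 := by
    intro i
    by_cases hiJn : i ∈ Jn
    · rw [if_pos hiJn]
      by_cases hN : N = 0
      · have ht1' : t = 1 := htN hN
        have hsV' : sV = 0 := by rw [hsVdef, if_pos hN]
        have hz : ∀ j ∈ (Finset.univ : Finset (Fin n)),
            rp (j,i) * ((a j * mm j i:ℚ):ℝ) = 0 := by
          intro j _
          rw [hrpdef]; dsimp only
          split_ifs with h
          · rw [ht1']; norm_num
          · exact zero_mul _
        rw [Finset.sum_congr rfl hz, Finset.sum_const_zero, hsV', zero_mul]
      · have hterm : ∀ j ∈ (Finset.univ : Finset (Fin n)),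
            rp (j,i) * ((a j * mm j i : ℚ):ℝ)
              = if j ∈ S then (1-t) * y i / N * ((a j:ℝ) * y j) else 0 := by
          intro j _
          rw [hrpdef]; dsimp only
          by_cases hjS : j ∈ S
          · rw [if_pos ⟨hjS, hiJn⟩, if_pos hjS]
            have hmne : ((mm j i:ℚ):ℝ) ≠ 0 := ne_of_gt (hmR j i)
            have hcast : ((a j * mm j i:ℚ):ℝ) = (a j:ℝ) * ((mm j i:ℚ):ℝ) := by push_cast; ring
            rw [hcast]
            field_simp
          · rw [if_neg (by tauto), if_neg hjS, zero_mul]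
        rw [Finset.sum_congr rfl hterm, Finset.sum_ite_mem, Finset.univ_inter,
          ← Finset.mul_sum, hPpS]
        have hsV' : sV = (1-t) * Pp / N := by rw [hsVdef, if_neg hN]
        rw [hsV']
        field_simp
    · rw [if_neg hiJn]
      refine Finset.sum_eq_zero (fun j _ => ?_)
      rw [hrpdef]; dsimp only; rw [if_neg (by tauto), zero_mul]
  -- pointwise evaluations
  have hsum1 : ∀ i, (∑ j : Fin n, gam j • sgl j) i = gam i := by
    intro i
    rw [Finset.sum_apply]
    have hterm : ∀ j ∈ (Finset.univ : Finset (Fin n)),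
        (gam j • sgl j) i = if i = j then gam j else 0 := by
      intro j _
      rw [hsgldef]; dsimp only [Pi.smul_apply, smul_eq_mul]
      split_ifs <;> simp
    rw [Finset.sum_congr rfl hterm, Finset.sum_ite_eq, if_pos (Finset.mem_univ i)]
  have hsump : ∀ i, p i = if i ∈ S then t * y i else 0 := by
    intro i
    rw [hpdef, Finset.sum_apply]
    have hterm : ∀ j ∈ S,
        (lam j • zvec j) i = if i = j then lam j * ((c j : ℤ):ℝ) else 0 := by
      intro j _
      rw [hzvecdef]; dsimp only [Pi.smul_apply, smul_eq_mul]
      split_ifs <;> simp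
    rw [Finset.sum_congr rfl hterm, Finset.sum_ite_eq]
    split_ifs with h
    · have hcne : ((c i : ℤ):ℝ) ≠ 0 := by
        have := hc1 i h
        have h1 : (1:ℝ) ≤ ((c i : ℤ):ℝ) := by exact_mod_cast this
        linarith
      rw [hlamdef]; dsimp only
      exact div_mul_cancel₀ _ hcne
    · rfl
  have hsplitdd : ∀ q ∈ (Finset.univ ×ˢ Finset.univ : Finset (Fin n × Fin n)),
      rp q • dd q = (rp q * ((a q.2 * mm q.1 q.2:ℚ):ℝ)) • sgl q.1
        + (rp q * ((a q.1 * mm q.1 q.2:ℚ):ℝ)) • sgl q.2 := by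
    intro q _
    by_cases hq : q.1 ∈ S ∧ q.2 ∈ Jn
    · have hne : q.1 ≠ q.2 := fun h => (hSJn q.1 hq.1) (h ▸ hq.2)
      funext i
      rw [hdddef, hsgldef]; dsimp only [Pi.add_apply, Pi.smul_apply, smul_eq_mul]
      by_cases h1 : i = q.1
      · have h2 : i ≠ q.2 := h1 ▸ hne
        rw [if_pos h1, if_pos h1, if_neg h2]; ring
      · rw [if_neg h1, if_neg h1]
        by_cases h2 : i = q.2
        · rw [if_pos h2, if_pos h2]; ring
        · rw [if_neg h2, if_neg h2]; ring
    · have h0 : rp q = 0 := by rw [hrpdef]; dsimp only; rw [if_neg hq]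
      rw [h0]
      simp
  have hpairsum : ∀ i, (∑ q ∈ Finset.univ ×ˢ Finset.univ, rp q • dd q) i
      = (∑ k : Fin n, rp (i,k) * ((a k * mm i k:ℚ):ℝ))
        + (∑ j : Fin n, rp (j,i) * ((a j * mm j i:ℚ):ℝ)) := by
    intro i
    rw [Finset.sum_congr rfl hsplitdd, Finset.sum_apply]
    have step1 : ∀ q ∈ (Finset.univ ×ˢ Finset.univ : Finset (Fin n × Fin n)),
        ((rp q * ((a q.2 * mm q.1 q.2:ℚ):ℝ)) • sgl q.1
          + (rp q * ((a q.1 * mm q.1 q.2:ℚ):ℝ)) • sgl q.2) i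
        = (if i = q.1 then rp q * ((a q.2 * mm q.1 q.2:ℚ):ℝ) else 0)
          + (if i = q.2 then rp q * ((a q.1 * mm q.1 q.2:ℚ):ℝ) else 0) := by
      intro q _
      rw [hsgldef]; dsimp only [Pi.add_apply, Pi.smul_apply, smul_eq_mul]
      split_ifs <;> ring
    rw [Finset.sum_congr rfl step1, Finset.sum_add_distrib]
    congr 1
    · rw [Finset.sum_product]
      have inner : ∀ j ∈ (Finset.univ : Finset (Fin n)),
          (∑ k : Fin n, if i = j then rp (j,k) * ((a k * mm j k:ℚ):ℝ) else 0)
            = if i = j then (∑ k : Fin n, rp (j,k) * ((a k * mm j k:ℚ):ℝ)) else 0 := by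
        intro j _
        split_ifs <;> simp
      rw [Finset.sum_congr rfl inner, Finset.sum_ite_eq, if_pos (Finset.mem_univ i)]
    · rw [Finset.sum_product]
      have inner : ∀ j ∈ (Finset.univ : Finset (Fin n)),
          (∑ k : Fin n, if i = k then rp (j,k) * ((a j * mm j k:ℚ):ℝ) else 0)
            = rp (j,i) * ((a j * mm j i:ℚ):ℝ) := by
        intro j _
        rw [Finset.sum_ite_eq, if_pos (Finset.mem_univ i)]
      rw [Finset.sum_congr rfl inner]
  -- the grand decomposition
  have heq : y = (p + ∑ j : Fin n, gam j • sgl j)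
      + ∑ q ∈ Finset.univ ×ˢ Finset.univ, rp q • dd q := by
    funext i
    have hiu : i ∈ Jp ∪ Jn := by rw [hunion]; exact Finset.mem_univ i
    rw [Pi.add_apply, Pi.add_apply, hsum1 i, hpairsum i, hR1 i, hR2 i, hsump i]
    rcases Finset.mem_union.1 hiu with hip | hin
    · have hinot : i ∉ Jn := Finset.disjoint_left.1 hdisj hip
      have hgi : gam i = if a i = 0 then y i else 0 := by
        rw [hgamdef]; dsimp only; rw [if_neg hinot]
      by_cases hai : 0 < a i
      · have hiS : i ∈ S := Finset.mem_filter.2 ⟨hip, hai⟩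
        rw [if_pos hiS, if_pos hiS, if_neg hinot, hgi, if_neg (ne_of_gt hai)]
        ring
      · have hiS : i ∉ S := fun h => hai (haS i h)
        have hai0 : a i = 0 := le_antisymm (not_lt.1 hai) (ha i)
        rw [if_neg hiS, if_neg hiS, if_neg hinot, hgi, if_pos hai0]
        ring
    · have hinp : i ∉ Jp := Finset.disjoint_right.1 hdisj hin
      have hiS : i ∉ S := fun h => hinp (hSsub h)
      have hgi : gam i = (1 - sV) * y i := by
        rw [hgamdef]; dsimp only; rw [if_pos hin]
      rw [if_neg hiS, if_neg hiS, if_pos hin, hgi]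
      ring
  -- conclude
  have h1 : p + ∑ j : Fin n, gam j • sgl j ∈ K :=
    add_rays Jp Jn a b Finset.univ gam sgl hgamvalid p hpK
  have h2 := add_rays Jp Jn a b (Finset.univ ×ˢ Finset.univ) rp dd hddvalid _ h1
  rw [heq]
  exact h2


end OneRowAux

/-- A `(J⁺,J⁻)` sign-pattern polyhedron `P` defined by a single non-trivial
constraint with rational data (`a_j ≥ 0`, `b ≥ 0`, `a_j ≤ b` on `J⁺`) satisfies `P ⊆ 2 · P^I`,
where `P^I = conv(P ∩ ℤⁿ)`. -/
theorem oneRow_subset_two_smul_integerHull {n : ℕ} (hn : 0 < n)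
    (Jp Jn : Finset (Fin n)) (hdisj : Disjoint Jp Jn) (hunion : Jp ∪ Jn = Finset.univ)
    (a : Fin n → ℚ) (ha : ∀ j, 0 ≤ a j) (b : ℚ) (hb : 0 ≤ b) (hab : ∀ j ∈ Jp, a j ≤ b) :
    oneRowPolyQ Jp Jn a b ⊆
      (2 : ℝ) • convexHull ℝ {x ∈ oneRowPolyQ Jp Jn a b | ∀ j, ∃ z : ℤ, x j = (z : ℝ)} := by
  intro x hx
  obtain ⟨hx0, hxL⟩ := hx
  set y : Fin n → ℝ := (2:ℝ)⁻¹ • x with hydef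
  have hy0 : ∀ j, 0 ≤ y j := fun j => mul_nonneg (by norm_num) (hx0 j)
  have hyL : OneRowAux.L Jp Jn a y ≤ (b:ℝ)/2 := by
    have hLx : OneRowAux.L Jp Jn a x ≤ (b:ℝ) := hxL
    have h2 : OneRowAux.L Jp Jn a y = (2:ℝ)⁻¹ * OneRowAux.L Jp Jn a x := by
      rw [hydef, OneRowAux.L_smul]
    rw [h2]; linarith
  have hmem := OneRowAux.main_aux Jp Jn hdisj hunion a ha b hb hab y hy0 hyL
  rw [Set.mem_smul_set]
  refine ⟨y, hmem, ?_⟩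
  funext i
  show (2:ℝ) * ((2:ℝ)⁻¹ * x i) = x i
  ring
end

section
/- Let P := {x ∈ ℝⁿ_+ : Ax ≤ b} be a packing polyhedron with exactly two non-trivial constraints (A ∈ ℝ^{2×n} with A_{ij} ≥ 0, b ∈ ℝ²_+, rational data) satisfying A_{ij} ≤ b_i for all i ∈ [2], j ∈ [n]. Then P ⊆ 3·P^I, where P^I := conv(P ∩ ℤⁿ). -/
open scoped Pointwise

/-- The packing polyhedron `P = {x ≥ 0 : Ax ≤ b}` with two non-trivial constraints. -/
def twoRowPackPoly {n : ℕ} (A : Matrix (Fin 2) (Fin n) ℚ) (b : Fin 2 → ℚ) :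
    Set (Fin n → ℝ) :=
  {x | (∀ j, 0 ≤ x j) ∧ ∀ i : Fin 2, ∑ j, (A i j : ℝ) * x j ≤ (b i : ℝ)}

namespace TwoRowPackAux

variable {n : ℕ}

open scoped Classical in
noncomputable def frSet (x : Fin n → ℝ) : Finset (Fin n) :=
  Finset.univ.filter (fun j => ∀ z : ℤ, x j ≠ (z : ℝ))

lemma mem_frSet {x : Fin n → ℝ} {j : Fin n} :
    j ∈ frSet x ↔ ∀ z : ℤ, x j ≠ (z : ℝ) := by
  simp [frSet]

lemma floor_lt_of_mem {x : Fin n → ℝ} {j : Fin n} (h : j ∈ frSet x) :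
    ((⌊x j⌋ : ℝ)) < x j :=
  lt_of_le_of_ne (Int.floor_le _) (fun he => (mem_frSet.1 h ⌊x j⌋) he.symm)

lemma lt_ceil_of_mem {x : Fin n → ℝ} {j : Fin n} (h : j ∈ frSet x) :
    x j < ((⌈x j⌉ : ℝ)) :=
  lt_of_le_of_ne (Int.le_ceil _) (mem_frSet.1 h ⌈x j⌉)

lemma exists_step (A : Matrix (Fin 2) (Fin n) ℚ) (b : Fin 2 → ℚ)
    (x d : Fin n → ℝ)
    (hx1 : ∀ j, 0 ≤ x j) (hx2 : ∀ i : Fin 2, ∑ j, (A i j : ℝ) * x j ≤ (b i : ℝ))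
    (hd0 : ∀ i : Fin 2, ∑ j, (A i j : ℝ) * d j = 0)
    (hsupp : ∀ k, d k ≠ 0 → k ∈ frSet x)
    (hd : ∃ k, d k ≠ 0) :
    ∃ t : ℝ, 0 < t ∧ (∀ j, 0 ≤ x j + t * d j) ∧
      (∀ i : Fin 2, ∑ j, (A i j : ℝ) * (x j + t * d j) ≤ (b i : ℝ)) ∧
      frSet (fun j => x j + t * d j) ⊂ frSet x := by
  classical
  set K : Finset (Fin n) := Finset.univ.filter (fun k => d k ≠ 0) with hK
  have hKne : K.Nonempty := by
    obtain ⟨k, hk⟩ := hd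
    exact ⟨k, by simp [hK, hk]⟩
  have hKd : ∀ k ∈ K, d k ≠ 0 := fun k hk => (Finset.mem_filter.1 hk).2
  set bound : Fin n → ℝ := fun k =>
    if 0 < d k then ((⌈x k⌉ : ℝ) - x k) / d k else (x k - (⌊x k⌋ : ℝ)) / (-d k) with hbound
  have hbpos : ∀ k ∈ K, 0 < bound k := by
    intro k hk
    have hkf : k ∈ frSet x := hsupp k (hKd k hk)
    by_cases h : 0 < d k
    · simp only [hbound, if_pos h]
      exact div_pos (sub_pos.2 (lt_ceil_of_mem hkf)) h
    · have hneg : d k < 0 := lt_of_le_of_ne (not_lt.1 h) (hKd k hk)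
      simp only [hbound, if_neg h]
      exact div_pos (sub_pos.2 (floor_lt_of_mem hkf)) (neg_pos.2 hneg)
  set t : ℝ := K.inf' hKne bound with ht
  have htpos : 0 < t := (Finset.lt_inf'_iff hKne).2 hbpos
  have htle : ∀ k ∈ K, t ≤ bound k := fun k hk => Finset.inf'_le bound hk
  -- bounds for coordinates
  have hub : ∀ k, 0 < d k → x k + t * d k ≤ (⌈x k⌉ : ℝ) := by
    intro k hdk
    have hk : k ∈ K := by simp [hK, ne_of_gt hdk]
    have := htle k hk
    rw [hbound] at this
    simp only [if_pos hdk] at this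
    have : t * d k ≤ ((⌈x k⌉ : ℝ) - x k) := by
      rw [← le_div_iff₀ hdk] at *
      exact this
    linarith
  have hlb : ∀ k, d k < 0 → (⌊x k⌋ : ℝ) ≤ x k + t * d k := by
    intro k hdk
    have hk : k ∈ K := by simp [hK, ne_of_lt hdk]
    have h1 := htle k hk
    rw [hbound] at h1
    simp only [if_neg (not_lt.2 (le_of_lt hdk))] at h1
    have h2 : t * (-d k) ≤ x k - (⌊x k⌋ : ℝ) := by
      rw [← le_div_iff₀ (neg_pos.2 hdk)]
      exact h1
    nlinarith
  have hnn : ∀ j, 0 ≤ x j + t * d j := by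
    intro j
    rcases lt_trichotomy (d j) 0 with h | h | h
    · have h0 : (0 : ℝ) ≤ (⌊x j⌋ : ℝ) := by
        exact_mod_cast Int.floor_nonneg.2 (hx1 j)
      linarith [hlb j h]
    · simp [h, hx1 j]
    · nlinarith [hx1 j, htpos]
  refine ⟨t, htpos, hnn, ?_, ?_⟩
  · intro i
    have : ∑ j, (A i j : ℝ) * (x j + t * d j)
        = (∑ j, (A i j : ℝ) * x j) + t * ∑ j, (A i j : ℝ) * d j := by
      rw [Finset.mul_sum, ← Finset.sum_add_distrib]
      congr 1; funext j; ring
    rw [this, hd0 i]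
    simpa using hx2 i
  · -- strict subset of fractional sets
    have hsub : frSet (fun j => x j + t * d j) ⊆ frSet x := by
      intro k hk
      by_cases h : d k = 0
      · rw [mem_frSet] at hk ⊢
        simpa [h] using hk
      · exact hsupp k h
    obtain ⟨k₀, hk₀K, hk₀⟩ := Finset.exists_mem_eq_inf' hKne bound
    refine Finset.ssubset_iff_of_subset hsub |>.2 ⟨k₀, hsupp k₀ (hKd k₀ hk₀K), ?_⟩
    rw [mem_frSet]
    push_neg
    rcases lt_or_gt_of_ne (hKd k₀ hk₀K) with h | h
    · refine ⟨⌊x k₀⌋, ?_⟩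
      rw [ht, hk₀, hbound]
      simp only [if_neg (not_lt.2 (le_of_lt h))]
      have hcan : (x k₀ - (⌊x k₀⌋ : ℝ)) / (-d k₀) * d k₀ = -(x k₀ - (⌊x k₀⌋ : ℝ)) := by
        rw [div_neg, neg_mul, div_mul_cancel₀ _ (ne_of_lt h)]
      linarith [hcan]
    · refine ⟨⌈x k₀⌉, ?_⟩
      rw [ht, hk₀, hbound]
      simp only [if_pos h]
      have hcan : ((⌈x k₀⌉ : ℝ) - x k₀) / d k₀ * d k₀ = (⌈x k₀⌉ : ℝ) - x k₀ :=
        div_mul_cancel₀ _ (ne_of_gt h)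
      linarith [hcan]


lemma base_mem (A : Matrix (Fin 2) (Fin n) ℚ) (b : Fin 2 → ℚ)
    (hA : ∀ i j, 0 ≤ A i j) (hb : ∀ i, 0 ≤ b i) (hAb : ∀ i j, A i j ≤ b i)
    (x : Fin n → ℝ)
    (hx1 : ∀ j, 0 ≤ x j) (hx2 : ∀ i : Fin 2, ∑ j, (A i j : ℝ) * x j ≤ (b i : ℝ))
    (hcard : (frSet x).card ≤ 2) :
    (3 : ℝ)⁻¹ • x ∈
      convexHull ℝ {y ∈ twoRowPackPoly A b | ∀ j, ∃ z : ℤ, y j = (z : ℝ)} := by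
  classical
  set S : Set (Fin n → ℝ) := {y ∈ twoRowPackPoly A b | ∀ j, ∃ z : ℤ, y j = (z : ℝ)} with hS
  -- the integer points used
  have hwS : (fun j => ((⌊x j⌋ : ℤ) : ℝ)) ∈ S := by
    refine ⟨⟨fun j => ?_, fun i => ?_⟩, fun j => ⟨⌊x j⌋, rfl⟩⟩
    · show (0:ℝ) ≤ ((⌊x j⌋ : ℤ) : ℝ)
      exact_mod_cast Int.floor_nonneg.2 (hx1 j)
    · refine le_trans (Finset.sum_le_sum fun j _ => ?_) (hx2 i)
      have h0 : (0 : ℝ) ≤ (A i j : ℝ) := by exact_mod_cast hA i j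
      exact mul_le_mul_of_nonneg_left (Int.floor_le _) h0
  have h0S : (0 : Fin n → ℝ) ∈ S := by
    refine ⟨⟨fun j => le_refl 0, fun i => ?_⟩, fun j => ⟨0, by simp⟩⟩
    simp only [Pi.zero_apply, mul_zero, Finset.sum_const_zero]
    exact_mod_cast hb i
  have heS : ∀ j : Fin n, (Pi.single j (1 : ℝ) : Fin n → ℝ) ∈ S := by
    intro j
    refine ⟨⟨fun k => ?_, fun i => ?_⟩, fun k => ⟨if k = j then 1 else 0, ?_⟩⟩
    · by_cases h : k = j <;> simp [Pi.single_apply, h]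
    · have h : ∑ k, (A i k : ℝ) * (Pi.single j (1 : ℝ) : Fin n → ℝ) k = (A i j : ℝ) := by
        simp [Pi.single_apply, mul_ite, Finset.sum_ite_eq]
      rw [h]; exact_mod_cast hAb i j
    · by_cases h : k = j <;> simp [Pi.single_apply, h]
  -- fract facts
  have hfr0 : ∀ j, j ∉ frSet x → Int.fract (x j) = 0 := by
    intro j hj
    rw [mem_frSet] at hj
    push_neg at hj
    obtain ⟨z, hz⟩ := hj
    rw [hz]; exact Int.fract_intCast z
  have hfrsum : ∑ j, Int.fract (x j) ≤ 2 := by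
    have h1 : ∑ j, Int.fract (x j) = ∑ j ∈ frSet x, Int.fract (x j) :=
      (Finset.sum_subset (Finset.subset_univ _) (fun j _ hj => hfr0 j hj)).symm
    rw [h1]
    calc ∑ j ∈ frSet x, Int.fract (x j) ≤ ∑ j ∈ frSet x, 1 :=
          Finset.sum_le_sum fun j _ => le_of_lt (Int.fract_lt_one _)
      _ = (frSet x).card := by simp
      _ ≤ 2 := by exact_mod_cast hcard
  -- the convex combination
  set c₀ : ℝ := 2/3 - (∑ j, Int.fract (x j))/3 with hc₀
  have hc₀nn : 0 ≤ c₀ := by rw [hc₀]; linarith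
  set W : Fin 2 ⊕ Fin n → ℝ := Sum.elim ![1/3, c₀] (fun j => Int.fract (x j) / 3) with hW
  set Z : Fin 2 ⊕ Fin n → (Fin n → ℝ) :=
    Sum.elim ![fun j => ((⌊x j⌋ : ℤ) : ℝ), 0] (fun j => Pi.single j (1 : ℝ)) with hZ
  have hmain : ∑ i, W i • Z i = (3 : ℝ)⁻¹ • x := by
    funext k
    have hsingle : ∑ j : Fin n, (Int.fract (x j) / 3) * (Pi.single j (1 : ℝ) : Fin n → ℝ) k
        = Int.fract (x k) / 3 := by
      simp [Pi.single_apply, mul_ite, Finset.sum_ite_eq]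
    have hfl : ((⌊x k⌋ : ℤ) : ℝ) + Int.fract (x k) = x k := Int.floor_add_fract _
    simp only [Finset.sum_apply, Pi.smul_apply, smul_eq_mul, Fintype.sum_sum_type, hW, hZ,
      Fin.sum_univ_two, Sum.elim_inl, Sum.elim_inr, Matrix.cons_val_zero, Matrix.cons_val_one,
      Matrix.head_cons, Pi.zero_apply, mul_zero]
    rw [hsingle]
    linarith
  rw [← hmain]
  refine (convex_convexHull ℝ S).sum_mem (fun i _ => ?_) ?_ (fun i _ => ?_)
  · rcases i with i | j
    · fin_cases i
      · norm_num [hW]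
      · simpa [hW] using hc₀nn
    · simp only [hW, Sum.elim_inr]
      exact div_nonneg (Int.fract_nonneg _) (by norm_num)
  · simp only [hW, Fintype.sum_sum_type, Fin.sum_univ_two, Sum.elim_inl, Sum.elim_inr,
      Matrix.cons_val_zero, Matrix.cons_val_one, Matrix.head_cons]
    rw [Finset.sum_div] at hc₀
    rw [hc₀]
    ring_nf
  · rcases i with i | j
    · fin_cases i
      · exact subset_convexHull ℝ S hwS
      · exact subset_convexHull ℝ S h0S
    · exact subset_convexHull ℝ S (heS j)

lemma key (A : Matrix (Fin 2) (Fin n) ℚ) (b : Fin 2 → ℚ)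
    (hA : ∀ i j, 0 ≤ A i j) (hb : ∀ i, 0 ≤ b i) (hAb : ∀ i j, A i j ≤ b i) :
    ∀ N : ℕ, ∀ x : Fin n → ℝ,
      (∀ j, 0 ≤ x j) → (∀ i : Fin 2, ∑ j, (A i j : ℝ) * x j ≤ (b i : ℝ)) →
      (frSet x).card ≤ N →
      (3 : ℝ)⁻¹ • x ∈
        convexHull ℝ {y ∈ twoRowPackPoly A b | ∀ j, ∃ z : ℤ, y j = (z : ℝ)} := by
  intro N
  induction N with
  | zero =>
    intro x hx1 hx2 hc
    exact base_mem A b hA hb hAb x hx1 hx2 (le_trans hc (by norm_num))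
  | succ N ih =>
    intro x hx1 hx2 hc
    by_cases hsmall : (frSet x).card ≤ 2
    · exact base_mem A b hA hb hAb x hx1 hx2 hsmall
    · have h3 : 2 < (frSet x).card := not_le.1 hsmall
      obtain ⟨j1, j2, j3, hj1, hj2, hj3, h12, h13, h23⟩ := Finset.two_lt_card_iff.1 h3
      classical
      set v : Fin 3 → (Fin 2 → ℝ) :=
        ![fun i => (A i j1 : ℝ), fun i => (A i j2 : ℝ), fun i => (A i j3 : ℝ)] with hv
      have hdep : ¬ LinearIndependent ℝ v := by
        intro h
        have hle := h.fintype_card_le_finrank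
        rw [Module.finrank_fin_fun] at hle
        simp at hle
      obtain ⟨g, hg0, i0, hgi0⟩ := Fintype.not_linearIndependent_iff.1 hdep
      set d : Fin n → ℝ := fun k =>
        if k = j1 then g 0 else if k = j2 then g 1 else if k = j3 then g 2 else 0 with hd
      have hdval : ∀ i : Fin 2, ∑ k, (A i k : ℝ) * d k = 0 := by
        intro i
        have hpt : ∀ k, (A i k : ℝ) * d k =
            (if k = j1 then (A i j1 : ℝ) * g 0 else 0) +
            (if k = j2 then (A i j2 : ℝ) * g 1 else 0) +
            (if k = j3 then (A i j3 : ℝ) * g 2 else 0) := by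
          intro k
          rw [hd]
          by_cases h1 : k = j1 <;> by_cases h2 : k = j2 <;> by_cases h3' : k = j3 <;>
            simp_all
        rw [Finset.sum_congr rfl (fun k _ => hpt k)]
        rw [Finset.sum_add_distrib, Finset.sum_add_distrib]
        simp only [Finset.sum_ite_eq', Finset.mem_univ, if_pos]
        have hgi := congr_fun hg0 i
        simp only [Finset.sum_apply, Pi.smul_apply, smul_eq_mul, Fin.sum_univ_three, hv,
          Matrix.cons_val_zero, Matrix.cons_val_one, Matrix.head_cons, Pi.zero_apply,
          Matrix.cons_val_two, Matrix.tail_cons] at hgi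
        linear_combination hgi
      have hdsupp : ∀ k, d k ≠ 0 → k ∈ frSet x := by
        intro k hk
        rw [hd] at hk
        simp only at hk
        by_cases h1 : k = j1
        · subst h1; exact hj1
        · by_cases h2 : k = j2
          · subst h2; exact hj2
          · by_cases h3' : k = j3
            · subst h3'; exact hj3
            · simp [h1, h2, h3'] at hk
      have hdne : ∃ k, d k ≠ 0 := by
        fin_cases i0
        · exact ⟨j1, by simpa [hd] using hgi0⟩
        · exact ⟨j2, by simpa [hd, Ne.symm h12] using hgi0⟩
        · exact ⟨j3, by simpa [hd, Ne.symm h13, Ne.symm h23] using hgi0⟩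
      obtain ⟨t1, ht1, hp1, hq1, hss1⟩ := exists_step A b x d hx1 hx2 hdval hdsupp hdne
      obtain ⟨t2, ht2, hp2, hq2, hss2⟩ := exists_step A b x (fun k => -d k) hx1 hx2
        (by intro i; have := hdval i; simpa [mul_neg, Finset.sum_neg_distrib] using this)
        (fun k hk => hdsupp k (by simpa using neg_ne_zero.1 hk))
        (by obtain ⟨k, hk⟩ := hdne; exact ⟨k, neg_ne_zero.2 hk⟩)
      have hcard1 : (frSet (fun j => x j + t1 * d j)).card ≤ N := by
        have := Finset.card_lt_card hss1; omega
      have hcard2 : (frSet (fun j => x j + t2 * (-d j))).card ≤ N := by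
        have := Finset.card_lt_card hss2; omega
      have hm1 := ih _ hp1 hq1 hcard1
      have hm2 := ih _ hp2 hq2 hcard2
      have hsum : (0:ℝ) < t1 + t2 := by linarith
      have hcomb : (3 : ℝ)⁻¹ • x =
          (t2/(t1+t2)) • ((3:ℝ)⁻¹ • (fun j => x j + t1 * d j)) +
          (t1/(t1+t2)) • ((3:ℝ)⁻¹ • (fun j => x j + t2 * (-d j))) := by
        funext k
        simp only [Pi.add_apply, Pi.smul_apply, smul_eq_mul]
        field_simp
        ring
      rw [hcomb]
      exact (convex_convexHull ℝ _) hm1 hm2 (by positivity) (by positivity)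
        (by field_simp; ring)

end TwoRowPackAux

/-- A packing polyhedron with exactly two non-trivial constraints and
rational data (`0 ≤ A_{ij}`, `0 ≤ b_i`, `A_{ij} ≤ b_i`) satisfies `P ⊆ 3 · P^I`, where
`P^I = conv(P ∩ ℤⁿ)`. -/
theorem twoRowPacking_subset_three_smul_integerHull {n : ℕ} (hn : 0 < n)
    (A : Matrix (Fin 2) (Fin n) ℚ) (b : Fin 2 → ℚ)
    (hA : ∀ i j, 0 ≤ A i j) (hb : ∀ i, 0 ≤ b i) (hAb : ∀ i j, A i j ≤ b i) :
    twoRowPackPoly A b ⊆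
      (3 : ℝ) • convexHull ℝ {x ∈ twoRowPackPoly A b | ∀ j, ∃ z : ℤ, x j = (z : ℝ)} := by
  intro x hx
  obtain ⟨hx1, hx2⟩ := hx
  have h := TwoRowPackAux.key A b hA hb hAb (TwoRowPackAux.frSet x).card x hx1 hx2 le_rfl
  exact Set.mem_smul_set.2 ⟨(3:ℝ)⁻¹ • x, h, by rw [smul_smul]; norm_num⟩
end

section
/- Let P := {x ∈ ℝⁿ_+ : Ax ≥ b} be a covering polyhedron with exactly two non-trivial constraints (A ∈ ℝ^{2×n} with A_{ij} ≥ 0, b ∈ ℝ²_+, rational data) satisfying A_{ij} ≤ b_i for all i ∈ [2], j ∈ [n]. Then P ⊆ (1/2.5)·P^I, where P^I := conv(P ∩ ℤⁿ); equivalently, for every nonnegative objective c ∈ ℝⁿ_+, min{cᵀx : x ∈ P ∩ ℤⁿ} ≤ 2.5 · min{cᵀx : x ∈ P}. -/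
open scoped Pointwise

/-- The covering polyhedron `P = {x ≥ 0 : Ax ≥ b}` with two non-trivial constraints. -/
def twoRowCoverPoly {n : ℕ} (A : Matrix (Fin 2) (Fin n) ℚ) (b : Fin 2 → ℚ) :
    Set (Fin n → ℝ) :=
  {x | (∀ j, 0 ≤ x j) ∧ ∀ i : Fin 2, ∑ j, (A i j : ℝ) * x j ≥ (b i : ℝ)}

section TwoRowCoveringAux

variable {n : ℕ} (a c y : Fin n → ℝ)

lemma buildZ (p q : Fin n) (hyp : y p ≠ 0) (hyq : y q ≠ 0) (k m : ℕ)
    (h1 : 1 ≤ (k : ℝ) * a p + (m : ℝ) * a q) (h2 : (k : ℝ) * a p + (m : ℝ) * a q ≤ ∑ j, a j * y j)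
    (h3 : 1 ≤ (k : ℝ) * c p + (m : ℝ) * c q) (h4 : (k : ℝ) * c p + (m : ℝ) * c q ≤ ∑ j, c j * y j) :
    ∃ z : Fin n → ℕ, (∀ j, z j ≠ 0 → y j ≠ 0) ∧
      1 ≤ ∑ j, a j * (z j : ℝ) ∧ (∑ j, a j * (z j : ℝ)) ≤ ∑ j, a j * y j ∧
      1 ≤ ∑ j, c j * (z j : ℝ) ∧ (∑ j, c j * (z j : ℝ)) ≤ ∑ j, c j * y j := by
  refine ⟨fun j => (if j = p then k else 0) + (if j = q then m else 0), ?_, ?_⟩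
  · intro j hj
    by_cases hjp : j = p
    · rwa [hjp]
    · by_cases hjq : j = q
      · rwa [hjq]
      · simp [hjp, hjq] at hj
  have key : ∀ f : Fin n → ℝ,
      ∑ j, f j * ((((if j = p then k else 0) + (if j = q then m else 0) : ℕ) : ℝ))
        = (k : ℝ) * f p + (m : ℝ) * f q := by
    intro f
    have e : ∀ j, f j * ((((if j = p then k else 0) + (if j = q then m else 0) : ℕ) : ℝ))
        = (if j = p then (k : ℝ) * f j else 0) + (if j = q then (m : ℝ) * f j else 0) := by
      intro j
      by_cases h1 : j = p <;> by_cases h2 : j = q <;> simp [h1, h2] <;> split_ifs <;> ring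
    rw [Finset.sum_congr rfl fun j _ => e j, Finset.sum_add_distrib]
    simp [Finset.sum_ite_eq']
  rw [key a, key c]
  exact ⟨h1, h2, h3, h4⟩

lemma existZsum (p : Fin n) (f g : Fin n → ℝ)
    (h : ∀ j, y j ≠ 0 → g p * f j ≤ f p * g j) (hy0 : ∀ j, 0 ≤ y j) :
    g p * (∑ j, f j * y j) ≤ f p * (∑ j, g j * y j) := by
  rw [Finset.mul_sum, Finset.mul_sum]
  apply Finset.sum_le_sum
  intro j _
  by_cases hyj : y j = 0
  · simp [hyj]
  · have h1 := h j hyj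
    have h2 := hy0 j
    calc g p * (f j * y j) = (g p * f j) * y j := by ring
      _ ≤ (f p * g j) * y j := mul_le_mul_of_nonneg_right h1 h2
      _ = f p * (g j * y j) := by ring

set_option maxHeartbeats 2000000 in
lemma existZcases (p q : Fin n) (hyp : y p ≠ 0) (hyq : y q ≠ 0)
    (ha1 : ∀ j, a j ≤ 1) (hc1 : ∀ j, c j ≤ 1)
    (hap : 0 < a p) (hcq : 0 < c q) (hcp0 : 0 ≤ c p) (haq0 : 0 ≤ a q)
    (hA : 5/2 ≤ ∑ j, a j * y j) (hC : 5/2 ≤ ∑ j, c j * y j)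
    (hPA : c p * (∑ j, a j * y j) ≤ a p * (∑ j, c j * y j))
    (hQC : a q * (∑ j, c j * y j) ≤ c q * (∑ j, a j * y j)) :
    ∃ z : Fin n → ℕ, (∀ j, z j ≠ 0 → y j ≠ 0) ∧
      1 ≤ ∑ j, a j * (z j : ℝ) ∧ (∑ j, a j * (z j : ℝ)) ≤ ∑ j, a j * y j ∧
      1 ≤ ∑ j, c j * (z j : ℝ) ∧ (∑ j, c j * (z j : ℝ)) ≤ ∑ j, c j * y j := by
  set A' := ∑ j, a j * y j with hA'def
  set C' := ∑ j, c j * y j with hC'def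
  have hA'pos : (0:ℝ) < A' := by linarith
  have hC'pos : (0:ℝ) < C' := by linarith
  have hAC : A' + C' ≤ A' * C' := by nlinarith
  set r := c p / a p with hrdef
  set t := a q / c q with htdef
  have hrγ : r * a p = c p := div_mul_cancel₀ _ (ne_of_gt hap)
  have htβ : t * c q = a q := div_mul_cancel₀ _ (ne_of_gt hcq)
  have hr0 : 0 ≤ r := div_nonneg hcp0 hap.le
  have ht0 : 0 ≤ t := div_nonneg haq0 hcq.le
  have hrA : r * A' ≤ C' := by
    rw [hrdef, div_mul_eq_mul_div, div_le_iff₀ hap]; linarith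
  have htC : t * C' ≤ A' := by
    rw [htdef, div_mul_eq_mul_div, div_le_iff₀ hcq]; linarith
  set mS := ⌈1 / c q⌉₊ with hmSdef
  set kS := ⌈1 / a p⌉₊ with hkSdef
  have hmS1 : 1 ≤ (mS : ℝ) * c q := by
    have := Nat.le_ceil (1 / c q)
    rw [div_le_iff₀ hcq] at this; linarith
  have hmS2 : (mS : ℝ) * c q ≤ 1 + c q := by
    have h := Nat.ceil_lt_add_one (by positivity : (0:ℝ) ≤ 1 / c q)
    have h2 := mul_lt_mul_of_pos_right h hcq
    have h3 : (1 / c q + 1) * c q = 1 + c q := by field_simp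
    rw [h3] at h2; exact h2.le
  have hkS1 : 1 ≤ (kS : ℝ) * a p := by
    have := Nat.le_ceil (1 / a p)
    rw [div_le_iff₀ hap] at this; linarith
  have hkS2 : (kS : ℝ) * a p ≤ 1 + a p := by
    have h := Nat.ceil_lt_add_one (by positivity : (0:ℝ) ≤ 1 / a p)
    have h2 := mul_lt_mul_of_pos_right h hap
    have h3 : (1 / a p + 1) * a p = 1 + a p := by field_simp
    rw [h3] at h2; exact h2.le
  -- Case A : mS copies of q suffice
  by_cases cA : 1 ≤ (mS : ℝ) * a q
  · refine buildZ a c y p q hyp hyq 0 mS ?_ ?_ ?_ ?_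
    · push_cast; linarith
    · push_cast
      have e1 : (mS : ℝ) * a q = t * ((mS : ℝ) * c q) := by rw [← htβ]; ring
      have e2 : t * ((mS : ℝ) * c q) ≤ t * (1 + c q) := mul_le_mul_of_nonneg_left hmS2 ht0
      have e3 : (t * (1 + c q)) * C' ≤ A' * C' := by
        nlinarith [htC, mul_le_mul_of_nonneg_right htC hcp0, hc1 q, hcq,
          mul_le_mul_of_nonneg_right htC (le_of_lt hcq)]
      have e4 : t * (1 + c q) ≤ A' := le_of_mul_le_mul_right e3 hC'pos
      linarith
    · push_cast; linarith
    · push_cast; linarith [hc1 q, hC]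
  -- Case B : kS copies of p suffice
  · by_cases cB : 1 ≤ (kS : ℝ) * c p
    · refine buildZ a c y p q hyp hyq kS 0 ?_ ?_ ?_ ?_
      · push_cast; linarith
      · push_cast; linarith [ha1 p, hA]
      · push_cast; linarith
      · push_cast
        have e1 : (kS : ℝ) * c p = r * ((kS : ℝ) * a p) := by rw [← hrγ]; ring
        have e2 : r * ((kS : ℝ) * a p) ≤ r * (1 + a p) := mul_le_mul_of_nonneg_left hkS2 hr0
        have e3 : (r * (1 + a p)) * A' ≤ C' * A' := by
          nlinarith [hrA, mul_le_mul_of_nonneg_right hrA haq0, ha1 p, hap,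
            mul_le_mul_of_nonneg_right hrA (le_of_lt hap)]
        have e4 : r * (1 + a p) ≤ C' := le_of_mul_le_mul_right e3 hA'pos
        linarith
    · have hβm : (mS : ℝ) * a q < 1 := not_le.mp cA
      have hγk : (kS : ℝ) * c p < 1 := not_le.mp cB
      have htm : t ≤ (mS : ℝ) * a q := by
        have h := mul_le_mul_of_nonneg_left hmS1 ht0
        have e : t * ((mS : ℝ) * c q) = (mS : ℝ) * a q := by rw [← htβ]; ring
        rw [e] at h; linarith
      have hrk : r ≤ (kS : ℝ) * c p := by
        have h := mul_le_mul_of_nonneg_left hkS1 hr0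
        have e : r * ((kS : ℝ) * a p) = (kS : ℝ) * c p := by rw [← hrγ]; ring
        rw [e] at h; linarith
      have ht1 : t < 1 := lt_of_le_of_lt htm hβm
      have hr1 : r < 1 := lt_of_le_of_lt hrk hγk
      -- Case C
      by_cases cC : c p + c q + r * (1 - t) ≤ C' - 1
      · set k := ⌈(1 - (mS : ℝ) * a q) / a p⌉₊ with hkdef
        have harg : (0:ℝ) ≤ (1 - (mS : ℝ) * a q) / a p := div_nonneg (by linarith) hap.le
        have hk1 : 1 - (mS : ℝ) * a q ≤ (k : ℝ) * a p := by
          have := Nat.le_ceil ((1 - (mS : ℝ) * a q) / a p)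
          rw [div_le_iff₀ hap] at this; linarith
        have hk2 : (k : ℝ) * a p ≤ 1 - (mS : ℝ) * a q + a p := by
          have h := Nat.ceil_lt_add_one harg
          have h2 := mul_lt_mul_of_pos_right h hap
          have h3 : ((1 - (mS : ℝ) * a q) / a p + 1) * a p = 1 - (mS : ℝ) * a q + a p := by
            field_simp
          rw [h3] at h2; exact h2.le
        refine buildZ a c y p q hyp hyq k mS ?_ ?_ ?_ ?_
        · linarith
        · linarith [ha1 p, hA]
        · have : (0:ℝ) ≤ (k : ℝ) * c p := mul_nonneg (Nat.cast_nonneg k) hcp0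
          linarith
        · have e1 : (k : ℝ) * c p = r * ((k : ℝ) * a p) := by rw [← hrγ]; ring
          have e2 : r * ((k : ℝ) * a p) ≤ r * (1 - t + a p) :=
            mul_le_mul_of_nonneg_left (by linarith) hr0
          have e5 : r * (1 - t + a p) = r * (1 - t) + c p := by rw [← hrγ]; ring
          linarith
      -- Case D
      · by_cases cD : a p + a q + t * (1 - r) ≤ A' - 1
        · set m := ⌈(1 - (kS : ℝ) * c p) / c q⌉₊ with hmdef
          have harg : (0:ℝ) ≤ (1 - (kS : ℝ) * c p) / c q := div_nonneg (by linarith) hcq.le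
          have hm1 : 1 - (kS : ℝ) * c p ≤ (m : ℝ) * c q := by
            have := Nat.le_ceil ((1 - (kS : ℝ) * c p) / c q)
            rw [div_le_iff₀ hcq] at this; linarith
          have hm2 : (m : ℝ) * c q ≤ 1 - (kS : ℝ) * c p + c q := by
            have h := Nat.ceil_lt_add_one harg
            have h2 := mul_lt_mul_of_pos_right h hcq
            have h3 : ((1 - (kS : ℝ) * c p) / c q + 1) * c q = 1 - (kS : ℝ) * c p + c q := by
              field_simp
            rw [h3] at h2; exact h2.le
          refine buildZ a c y p q hyp hyq kS m ?_ ?_ ?_ ?_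
          · have : (0:ℝ) ≤ (m : ℝ) * a q := mul_nonneg (Nat.cast_nonneg m) haq0
            linarith
          · have e1 : (m : ℝ) * a q = t * ((m : ℝ) * c q) := by rw [← htβ]; ring
            have e2 : t * ((m : ℝ) * c q) ≤ t * (1 - r + c q) :=
              mul_le_mul_of_nonneg_left (by linarith) ht0
            have e5 : t * (1 - r + c q) = t * (1 - r) + a q := by rw [← htβ]; ring
            linarith
          · linarith
          · linarith [hc1 q, hC]
        · push_neg at cC cD
          rcases le_or_gt (r * (1 - t)) (1/2) with hE1 | hFc
          · rcases le_or_gt (t * (1 - r)) (1/2) with hE2 | hGc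
            · -- Case E
              refine buildZ a c y p q hyp hyq 1 1 ?_ ?_ ?_ ?_
              · push_cast; linarith
              · push_cast; linarith [ha1 p, ha1 q, hA]
              · push_cast; linarith
              · push_cast; linarith [hc1 p, hc1 q, hC]
            · -- Case G : t(1-r) > 1/2
              have hrhalf : r < 1/2 := by nlinarith
              have hthalf : 1/2 < t := by nlinarith
              have hrt4 : r * (1 - t) < 1/4 := by nlinarith
              have hgd : 5/4 < c p + c q := by linarith [cC]
              have hγ : c p < 1/2 := by
                have : c p ≤ r := by rw [← hrγ]; nlinarith [ha1 p]
                linarith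
              have hδ34 : 3/4 < c q := by linarith
              have hβ38 : 3/8 < a q := by rw [← htβ]; nlinarith
              by_cases hbig : 1/2 ≤ a q
              · refine buildZ a c y p q hyp hyq 0 2 ?_ ?_ ?_ ?_ <;> push_cast
                · linarith
                · linarith [ha1 q, hA]
                · linarith
                · linarith [hc1 q, hC]
              · push_neg at hbig
                by_cases hsum : 1 ≤ a p + a q
                · refine buildZ a c y p q hyp hyq 1 1 ?_ ?_ ?_ ?_ <;> push_cast
                  · linarith
                  · linarith [ha1 p, ha1 q, hA]
                  · linarith
                  · linarith [hc1 p, hc1 q, hC]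
                · push_neg at hsum
                  set k := ⌈(1 - 2 * a q) / a p⌉₊ with hkdef
                  have harg : (0:ℝ) ≤ (1 - 2 * a q) / a p := div_nonneg (by linarith) hap.le
                  have hk1 : 1 - 2 * a q ≤ (k : ℝ) * a p := by
                    have := Nat.le_ceil ((1 - 2 * a q) / a p)
                    rw [div_le_iff₀ hap] at this; linarith
                  have hk2 : (k : ℝ) * a p ≤ 1 - 2 * a q + a p := by
                    have h := Nat.ceil_lt_add_one harg
                    have h2 := mul_lt_mul_of_pos_right h hap
                    have h3 : ((1 - 2 * a q) / a p + 1) * a p = 1 - 2 * a q + a p := by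
                      field_simp
                    rw [h3] at h2; exact h2.le
                  refine buildZ a c y p q hyp hyq k 2 ?_ ?_ ?_ ?_ <;> push_cast
                  · linarith
                  · linarith [ha1 p, hA]
                  · linarith [mul_nonneg (Nat.cast_nonneg k : (0:ℝ) ≤ (k:ℝ)) hcp0]
                  · -- k*cp + 2cq ≤ C'
                    have e1 : (k : ℝ) * c p = r * ((k : ℝ) * a p) := by rw [← hrγ]; ring
                    have e2 : r * ((k : ℝ) * a p) ≤ r * (2 - 3 * a q) :=
                      mul_le_mul_of_nonneg_left (by linarith) hr0
                    have e3 : r * (2 - 3 * a q) ≤ (1/2) * (2 - 3 * a q) :=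
                      mul_le_mul_of_nonneg_right (le_of_lt hrhalf) (by linarith)
                    linarith [hc1 q, hC]
          · -- Case F : r(1-t) > 1/2
            have hthalf : t < 1/2 := by nlinarith
            have hrhalf : 1/2 < r := by nlinarith
            have htr4 : t * (1 - r) < 1/4 := by nlinarith
            have hab : 5/4 < a p + a q := by linarith [cD]
            have hβ : a q < 1/2 := by
              have : a q ≤ t := by rw [← htβ]; nlinarith [hc1 q]
              linarith
            have hα34 : 3/4 < a p := by linarith
            have hγ38 : 3/8 < c p := by rw [← hrγ]; nlinarith
            by_cases hbig : 1/2 ≤ c p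
            · refine buildZ a c y p q hyp hyq 2 0 ?_ ?_ ?_ ?_ <;> push_cast
              · linarith
              · linarith [ha1 p, hA]
              · linarith
              · linarith [hc1 p, hC]
            · push_neg at hbig
              by_cases hsum : 1 ≤ c p + c q
              · refine buildZ a c y p q hyp hyq 1 1 ?_ ?_ ?_ ?_ <;> push_cast
                · linarith
                · linarith [ha1 p, ha1 q, hA]
                · linarith
                · linarith [hc1 p, hc1 q, hC]
              · push_neg at hsum
                set m := ⌈(1 - 2 * c p) / c q⌉₊ with hmdef
                have harg : (0:ℝ) ≤ (1 - 2 * c p) / c q := div_nonneg (by linarith) hcq.le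
                have hm1 : 1 - 2 * c p ≤ (m : ℝ) * c q := by
                  have := Nat.le_ceil ((1 - 2 * c p) / c q)
                  rw [div_le_iff₀ hcq] at this; linarith
                have hm2 : (m : ℝ) * c q ≤ 1 - 2 * c p + c q := by
                  have h := Nat.ceil_lt_add_one harg
                  have h2 := mul_lt_mul_of_pos_right h hcq
                  have h3 : ((1 - 2 * c p) / c q + 1) * c q = 1 - 2 * c p + c q := by
                    field_simp
                  rw [h3] at h2; exact h2.le
                refine buildZ a c y p q hyp hyq 2 m ?_ ?_ ?_ ?_ <;> push_cast
                · linarith [mul_nonneg (Nat.cast_nonneg m : (0:ℝ) ≤ (m:ℝ)) haq0]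
                · -- 2*ap + m*aq ≤ A'
                  have e1 : (m : ℝ) * a q = t * ((m : ℝ) * c q) := by rw [← htβ]; ring
                  have e2 : t * ((m : ℝ) * c q) ≤ t * (2 - 3 * c p) :=
                    mul_le_mul_of_nonneg_left (by linarith) ht0
                  have e3 : t * (2 - 3 * c p) ≤ (1/2) * (2 - 3 * c p) :=
                    mul_le_mul_of_nonneg_right (le_of_lt hthalf) (by linarith)
                  linarith [ha1 p, hA]
                · linarith
                · linarith [hc1 q, hC]

/-- **Existence of a cheap integer covering point.**  If `a, c ∈ [0,1]ⁿ`, `y ≥ 0`,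
`a·y ≥ 5/2` and `c·y ≥ 5/2`, then there is an integer vector `z` supported on the support
of `y` with `1 ≤ a·z ≤ a·y` and `1 ≤ c·z ≤ c·y`. -/
lemma existZ {n : ℕ} (a c y : Fin n → ℝ)
    (ha0 : ∀ j, 0 ≤ a j) (ha1 : ∀ j, a j ≤ 1)
    (hc0 : ∀ j, 0 ≤ c j) (hc1 : ∀ j, c j ≤ 1)
    (hy0 : ∀ j, 0 ≤ y j)
    (hA : 5/2 ≤ ∑ j, a j * y j) (hC : 5/2 ≤ ∑ j, c j * y j) :
    ∃ z : Fin n → ℕ, (∀ j, z j ≠ 0 → y j ≠ 0) ∧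
      1 ≤ ∑ j, a j * (z j : ℝ) ∧ (∑ j, a j * (z j : ℝ)) ≤ ∑ j, a j * y j ∧
      1 ≤ ∑ j, c j * (z j : ℝ) ∧ (∑ j, c j * (z j : ℝ)) ≤ ∑ j, c j * y j := by
  set A' := ∑ j, a j * y j with hA'def
  set C' := ∑ j, c j * y j with hC'def
  -- select p : minimizer of c j / a j over support with a j > 0
  have hpex : ∃ p, y p ≠ 0 ∧ 0 < a p ∧ ∀ j, y j ≠ 0 → c p * a j ≤ a p * c j := by
    have hne : (Finset.univ.filter (fun j : Fin n => y j ≠ 0 ∧ 0 < a j)).Nonempty := by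
      by_contra h
      rw [Finset.not_nonempty_iff_eq_empty, Finset.filter_eq_empty_iff] at h
      have hz : ∀ j, a j * y j = 0 := by
        intro j
        rcases not_and_or.mp (h (Finset.mem_univ j)) with h1 | h1
        · rw [not_not.mp h1]; ring
        · have : a j = 0 := le_antisymm (not_lt.mp h1) (ha0 j)
          rw [this]; ring
      have : A' = 0 := Finset.sum_eq_zero fun j _ => hz j
      rw [this] at hA; norm_num at hA
    obtain ⟨p, hpmem, hpmin⟩ := Finset.exists_min_image _ (fun j => c j / a j) hne
    rw [Finset.mem_filter] at hpmem
    refine ⟨p, hpmem.2.1, hpmem.2.2, fun j hj => ?_⟩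
    rcases eq_or_lt_of_le (ha0 j) with h0 | h0
    · rw [← h0]; simpa using mul_nonneg (le_of_lt hpmem.2.2) (hc0 j)
    · have hjm : j ∈ Finset.univ.filter (fun j : Fin n => y j ≠ 0 ∧ 0 < a j) := by
        rw [Finset.mem_filter]; exact ⟨Finset.mem_univ j, hj, h0⟩
      have := hpmin j hjm
      rw [div_le_div_iff₀ hpmem.2.2 h0] at this
      linarith
  -- select q : maximizer of c j / a j over support with c j > 0 (or an item with a = 0)
  have hqex : ∃ q, y q ≠ 0 ∧ 0 < c q ∧ ∀ j, y j ≠ 0 → a q * c j ≤ c q * a j := by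
    by_cases hzero : ∃ j, y j ≠ 0 ∧ 0 < c j ∧ a j = 0
    · obtain ⟨q, h1, h2, h3⟩ := hzero
      exact ⟨q, h1, h2, fun j hj => by
        rw [h3]; simpa using mul_nonneg (le_of_lt h2) (ha0 j)⟩
    · push_neg at hzero
      have hne : (Finset.univ.filter (fun j : Fin n => y j ≠ 0 ∧ 0 < c j)).Nonempty := by
        by_contra h
        rw [Finset.not_nonempty_iff_eq_empty, Finset.filter_eq_empty_iff] at h
        have hz : ∀ j, c j * y j = 0 := by
          intro j
          rcases not_and_or.mp (h (Finset.mem_univ j)) with h1 | h1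
          · rw [not_not.mp h1]; ring
          · have : c j = 0 := le_antisymm (not_lt.mp h1) (hc0 j)
            rw [this]; ring
        have : C' = 0 := Finset.sum_eq_zero fun j _ => hz j
        rw [this] at hC; norm_num at hC
      obtain ⟨q, hqmem, hqmax⟩ := Finset.exists_max_image _ (fun j => c j / a j) hne
      rw [Finset.mem_filter] at hqmem
      have haq : 0 < a q := by
        rcases eq_or_lt_of_le (ha0 q) with h0 | h0
        · exact absurd (hzero q hqmem.2.1 hqmem.2.2) (by rw [← h0]; simp)
        · exact h0
      refine ⟨q, hqmem.2.1, hqmem.2.2, fun j hj => ?_⟩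
      rcases eq_or_lt_of_le (hc0 j) with h0 | h0
      · rw [← h0]; simpa using mul_nonneg (le_of_lt hqmem.2.2) (ha0 j)
      · have haj : 0 < a j := by
          rcases eq_or_lt_of_le (ha0 j) with h1 | h1
          · exact absurd (hzero j hj h0) (by rw [← h1]; simp)
          · exact h1
        have hjm : j ∈ Finset.univ.filter (fun j : Fin n => y j ≠ 0 ∧ 0 < c j) := by
          rw [Finset.mem_filter]; exact ⟨Finset.mem_univ j, hj, h0⟩
        have := hqmax j hjm
        rw [div_le_div_iff₀ haj haq] at this
        linarith
  obtain ⟨p, hyp, hap, hpmin⟩ := hpex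
  obtain ⟨q, hyq, hcq, hqmax⟩ := hqex
  have hPA := existZsum y p a c hpmin hy0
  have hQC := existZsum y q c a hqmax hy0
  exact existZcases a c y p q hyp hyq ha1 hc1 hap hcq (hc0 p) (ha0 q) hA hC hPA hQC

set_option maxHeartbeats 1000000 in
lemma core2 (ha0 : ∀ j, 0 ≤ a j) (ha1 : ∀ j, a j ≤ 1)
    (hc0 : ∀ j, 0 ≤ c j) (hc1 : ∀ j, c j ≤ 1) :
    ∀ (N : ℕ) (s : Finset (Fin n)), s.card ≤ N → ∀ y : Fin n → ℝ,
      (∀ j, 0 ≤ y j) → (∀ j, y j ≠ 0 → j ∈ s) →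
      5/2 ≤ ∑ j, a j * y j → 5/2 ≤ ∑ j, c j * y j →
      ∃ (N' : ℕ) (w : Fin N' → ℝ) (Z : Fin N' → Fin n → ℕ),
        (∀ i, 0 ≤ w i) ∧ (∑ i, w i) = 1 ∧
        (∀ i, 1 ≤ ∑ j, a j * (Z i j : ℝ)) ∧
        (∀ i, 1 ≤ ∑ j, c j * (Z i j : ℝ)) ∧
        (∀ j, (∑ i, w i * (Z i j : ℝ)) ≤ y j) := by
  intro N
  induction N with
  | zero =>
    intro s hs y hy0 hsupp hA hC
    exfalso
    have hse : s = ∅ := Finset.card_eq_zero.mp (Nat.le_zero.mp hs)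
    have hy : ∀ j, y j = 0 := by
      intro j
      by_contra h
      have := hsupp j h
      rw [hse] at this
      exact absurd this (Finset.notMem_empty j)
    have : (∑ j, a j * y j) = 0 := Finset.sum_eq_zero fun j _ => by rw [hy j]; ring
    linarith
  | succ N ih =>
    intro s hs y hy0 hsupp hA hC
    obtain ⟨z, hzsupp, hz1, hz2, hz3, hz4⟩ := existZ a c y ha0 ha1 hc0 hc1 hy0 hA hC
    by_cases hall : ∀ j, (z j : ℝ) ≤ y j
    · refine ⟨1, fun _ => 1, fun _ => z, fun _ => zero_le_one, by simp, fun _ => hz1,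
        fun _ => hz3, fun j => ?_⟩
      simpa using hall j
    · push_neg at hall
      obtain ⟨j₀, hj₀⟩ := hall
      have hzj₀ : z j₀ ≠ 0 := by
        intro h
        rw [h] at hj₀
        exact absurd (hy0 j₀) (by simpa using not_le.mpr hj₀)
      have hTne : (Finset.univ.filter fun j : Fin n => z j ≠ 0).Nonempty :=
        ⟨j₀, by simp [hzj₀]⟩
      obtain ⟨p₀, hp₀mem, hp₀min⟩ :=
        Finset.exists_min_image _ (fun j => y j / (z j : ℝ)) hTne
      rw [Finset.mem_filter] at hp₀mem
      have hzp₀ : (0:ℝ) < (z p₀ : ℝ) := by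
        exact_mod_cast Nat.pos_of_ne_zero hp₀mem.2
      have hyp₀ : 0 < y p₀ := lt_of_le_of_ne (hy0 p₀) (Ne.symm (hzsupp p₀ hp₀mem.2))
      set lam := y p₀ / (z p₀ : ℝ) with hlamdef
      have hlam0 : 0 < lam := div_pos hyp₀ hzp₀
      have hlam1 : lam < 1 := by
        have hj₀mem : j₀ ∈ Finset.univ.filter fun j : Fin n => z j ≠ 0 := by simp [hzj₀]
        have h1 := hp₀min j₀ hj₀mem
        have hzj₀' : (0:ℝ) < (z j₀ : ℝ) := by exact_mod_cast Nat.pos_of_ne_zero hzj₀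
        have h2 : y j₀ / (z j₀ : ℝ) < 1 := (div_lt_one hzj₀').mpr hj₀
        exact lt_of_le_of_lt h1 h2
      have h1lam : (0:ℝ) < 1 - lam := by linarith
      have hlz : ∀ j, lam * (z j : ℝ) ≤ y j := by
        intro j
        by_cases hzj : z j = 0
        · rw [hzj]; simpa using hy0 j
        · have hmem : j ∈ Finset.univ.filter fun j : Fin n => z j ≠ 0 := by simp [hzj]
          have h1 := hp₀min j hmem
          have hzj' : (0:ℝ) < (z j : ℝ) := by exact_mod_cast Nat.pos_of_ne_zero hzj
          calc lam * (z j : ℝ) ≤ (y j / (z j : ℝ)) * (z j : ℝ) :=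
                mul_le_mul_of_nonneg_right h1 hzj'.le
            _ = y j := div_mul_cancel₀ _ (ne_of_gt hzj')
      set y' := fun j => (y j - lam * (z j : ℝ)) / (1 - lam) with hy'def
      have hy'0 : ∀ j, 0 ≤ y' j := fun j => div_nonneg (by linarith [hlz j]) h1lam.le
      have hy'p₀ : y' p₀ = 0 := by
        have : y p₀ - lam * (z p₀ : ℝ) = 0 := by
          rw [hlamdef, div_mul_cancel₀ _ (ne_of_gt hzp₀)]; ring
        simp [hy'def, this]
      have hp₀s : p₀ ∈ s := hsupp p₀ (ne_of_gt hyp₀)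
      have hcard : (s.erase p₀).card ≤ N := by
        rw [Finset.card_erase_of_mem hp₀s]
        omega
      have hsupp' : ∀ j, y' j ≠ 0 → j ∈ s.erase p₀ := by
        intro j hj
        have hjne : j ≠ p₀ := fun h => hj (h ▸ hy'p₀)
        have hyj : y j ≠ 0 := by
          intro h0
          apply hj
          have hzj : z j = 0 := by
            by_contra hz
            exact (hzsupp j hz) h0
          simp [hy'def, h0, hzj]
        exact Finset.mem_erase.mpr ⟨hjne, hsupp j hyj⟩
      have hsumy' : ∀ f : Fin n → ℝ,
          (∑ j, f j * y' j) = ((∑ j, f j * y j) - lam * ∑ j, f j * (z j : ℝ)) / (1 - lam) := by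
        intro f
        rw [Finset.mul_sum, ← Finset.sum_sub_distrib, Finset.sum_div]
        apply Finset.sum_congr rfl
        intro j _
        rw [hy'def]
        field_simp
      have hA' : 5/2 ≤ ∑ j, a j * y' j := by
        rw [hsumy' a, le_div_iff₀ h1lam]
        nlinarith [hz2, hA, hlam0.le]
      have hC' : 5/2 ≤ ∑ j, c j * y' j := by
        rw [hsumy' c, le_div_iff₀ h1lam]
        nlinarith [hz4, hC, hlam0.le]
      obtain ⟨N', w', Z', hw'0, hw'1, hZ'a, hZ'c, hmarg'⟩ :=
        ih (s.erase p₀) hcard y' hy'0 hsupp' hA' hC'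
      refine ⟨N' + 1, Fin.cons lam (fun i => (1 - lam) * w' i), Fin.cons z Z',
        ?_, ?_, ?_, ?_, ?_⟩
      · intro i
        refine Fin.cases ?_ (fun i => ?_) i
        · exact hlam0.le
        · simp only [Fin.cons_succ]
          exact mul_nonneg h1lam.le (hw'0 i)
      · rw [Fin.sum_cons, ← Finset.mul_sum, hw'1]; ring
      · intro i
        refine Fin.cases ?_ (fun i => ?_) i
        · simpa using hz1
        · simpa using hZ'a i
      · intro i
        refine Fin.cases ?_ (fun i => ?_) i
        · simpa using hz3
        · simpa using hZ'c i
      · intro j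
        rw [Fin.sum_univ_succ]
        simp only [Fin.cons_zero, Fin.cons_succ]
        have e1 : (∑ i, ((1 - lam) * w' i) * (Z' i j : ℝ))
            = (1 - lam) * ∑ i, w' i * (Z' i j : ℝ) := by
          rw [Finset.mul_sum]
          apply Finset.sum_congr rfl
          intro i _
          ring
        have e2 : (1 - lam) * (∑ i, w' i * (Z' i j : ℝ)) ≤ (1 - lam) * y' j :=
          mul_le_mul_of_nonneg_left (hmarg' j) h1lam.le
        have e3 : (1 - lam) * y' j = y j - lam * (z j : ℝ) := by
          rw [hy'def]
          field_simp
        rw [e1]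
        linarith

variable (A : Matrix (Fin 2) (Fin n) ℚ) (b : Fin 2 → ℚ)

def intPts : Set (Fin n → ℝ) :=
  {x ∈ twoRowCoverPoly A b | ∀ j, ∃ z : ℤ, x j = (z : ℝ)}

lemma natMem (v : Fin n → ℕ) (hv : ∀ i, (b i : ℝ) ≤ ∑ j, (A i j : ℝ) * (v j : ℝ)) :
    (fun j => ((v j : ℕ) : ℝ)) ∈ intPts A b := by
  refine ⟨⟨fun j => by positivity, fun i => hv i⟩, fun j => ⟨(v j : ℤ), by push_cast; rfl⟩⟩

lemma cube (hA : ∀ i j, 0 ≤ A i j) :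
    ∀ (N : ℕ) (D : Finset (Fin n)), D.card ≤ N → ∀ d : Fin n → ℝ, (∀ j, 0 ≤ d j) →
      (∀ j, d j ≠ 0 → j ∈ D) → ∀ v : Fin n → ℕ,
      (∀ i, (b i : ℝ) ≤ ∑ j, (A i j : ℝ) * (v j : ℝ)) →
      (fun j => (v j : ℝ) + d j) ∈ convexHull ℝ (intPts A b) := by
  intro N
  induction N with
  | zero =>
    intro D hD d hd0 hdsupp v hv
    have hDe : D = ∅ := Finset.card_eq_zero.mp (Nat.le_zero.mp hD)
    have hd : ∀ j, d j = 0 := by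
      intro j
      by_contra h
      have := hdsupp j h
      rw [hDe] at this
      exact absurd this (Finset.notMem_empty j)
    have : (fun j => (v j : ℝ) + d j) = fun j => ((v j : ℕ) : ℝ) := by
      funext j; rw [hd j]; ring
    rw [this]
    exact subset_convexHull ℝ _ (natMem A b v hv)
  | succ N ih =>
    intro D hD d hd0 hdsupp v hv
    by_cases hd : ∀ j, d j = 0
    · have : (fun j => (v j : ℝ) + d j) = fun j => ((v j : ℕ) : ℝ) := by
        funext j; rw [hd j]; ring
      rw [this]
      exact subset_convexHull ℝ _ (natMem A b v hv)
    · push_neg at hd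
      obtain ⟨j₀, hj₀⟩ := hd
      have hj₀pos : 0 < d j₀ := lt_of_le_of_ne (hd0 j₀) (Ne.symm hj₀)
      set K := ⌊d j₀⌋₊ with hKdef
      have hK1 : (K : ℝ) ≤ d j₀ := Nat.floor_le (hd0 j₀)
      have hK2 : d j₀ < (K : ℝ) + 1 := Nat.lt_floor_add_one _
      set f := d j₀ - (K : ℝ) with hfdef
      have hf0 : 0 ≤ f := by simp [hfdef]; linarith
      have hf1 : f < 1 := by simp [hfdef]; linarith
      set d' := Function.update d j₀ 0 with hd'def
      have hd'0 : ∀ j, 0 ≤ d' j := by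
        intro j
        by_cases h : j = j₀
        · simp [hd'def, h]
        · simp [hd'def, Function.update_of_ne h]; exact hd0 j
      have hd'supp : ∀ j, d' j ≠ 0 → j ∈ D.erase j₀ := by
        intro j hj
        have hjne : j ≠ j₀ := by
          intro h
          rw [h] at hj
          simp [hd'def] at hj
        rw [hd'def, Function.update_of_ne hjne] at hj
        exact Finset.mem_erase.mpr ⟨hjne, hdsupp j hj⟩
      have hj₀D : j₀ ∈ D := hdsupp j₀ hj₀
      have hcard : (D.erase j₀).card ≤ N := by
        rw [Finset.card_erase_of_mem hj₀D]; omega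
      -- two shifted integer points
      set v₁ := fun j => v j + (if j = j₀ then K else 0) with hv₁def
      set v₂ := fun j => v j + (if j = j₀ then K + 1 else 0) with hv₂def
      have hvshift : ∀ (M : ℕ) (i : Fin 2),
          (b i : ℝ) ≤ ∑ j, (A i j : ℝ) * ((v j + (if j = j₀ then M else 0) : ℕ) : ℝ) := by
        intro M i
        have e : ∀ j, (A i j : ℝ) * ((v j + (if j = j₀ then M else 0) : ℕ) : ℝ)
            = (A i j : ℝ) * (v j : ℝ) + (if j = j₀ then (A i j : ℝ) * M else 0) := by
          intro j
          by_cases h : j = j₀ <;> simp [h] <;> push_cast <;> ring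
        rw [Finset.sum_congr rfl fun j _ => e j, Finset.sum_add_distrib]
        have h2 : (0:ℝ) ≤ ∑ j, (if j = j₀ then (A i j : ℝ) * M else 0) := by
          rw [Finset.sum_ite_eq']
          simp only [Finset.mem_univ, if_true]
          have : (0:ℚ) ≤ A i j₀ := hA i j₀
          positivity
        linarith [hv i]
      have hm₁ : (fun j => (v₁ j : ℝ) + d' j) ∈ convexHull ℝ (intPts A b) :=
        ih (D.erase j₀) hcard d' hd'0 hd'supp v₁ (fun i => hvshift K i)
      have hm₂ : (fun j => (v₂ j : ℝ) + d' j) ∈ convexHull ℝ (intPts A b) :=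
        ih (D.erase j₀) hcard d' hd'0 hd'supp v₂ (fun i => hvshift (K+1) i)
      have hcombo : (fun j => (v j : ℝ) + d j)
          = (1 - f) • (fun j => (v₁ j : ℝ) + d' j) + f • (fun j => (v₂ j : ℝ) + d' j) := by
        funext j
        simp only [Pi.add_apply, Pi.smul_apply, smul_eq_mul]
        by_cases h : j = j₀
        · subst h
          have e1 : ((v₁ j : ℕ) : ℝ) = (v j : ℝ) + (K : ℝ) := by
            simp [hv₁def]
          have e2 : ((v₂ j : ℕ) : ℝ) = (v j : ℝ) + (K : ℝ) + 1 := by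
            simp [hv₂def]; push_cast; ring
          have e3 : d' j = 0 := by simp [hd'def]
          rw [e1, e2, e3, hfdef]
          ring
        · simp [hv₁def, hv₂def, hd'def, Function.update_of_ne h, h]
          ring
      rw [hcombo]
      exact (convex_convexHull ℝ _) hm₁ hm₂ (by linarith) hf0 (by ring)

lemma domsum (hA : ∀ i j, 0 ≤ A i j) (N : ℕ) (w : Fin N → ℝ) (Z : Fin N → Fin n → ℕ)
    (hw0 : ∀ i, 0 ≤ w i) (hw1 : ∑ i, w i = 1)
    (hg : ∀ i i', (b i' : ℝ) ≤ ∑ j, (A i' j : ℝ) * (Z i j : ℝ))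
    (y : Fin n → ℝ) (hd : ∀ j, (∑ i, w i * (Z i j : ℝ)) ≤ y j) :
    y ∈ convexHull ℝ (intPts A b) := by
  set d := fun j => y j - ∑ i, w i * (Z i j : ℝ) with hddef
  have hd0 : ∀ j, 0 ≤ d j := fun j => by simp [hddef]; linarith [hd j]
  have hy : y = ∑ i, w i • (fun j => (Z i j : ℝ) + d j) := by
    funext j
    rw [Finset.sum_apply]
    simp only [Pi.smul_apply, smul_eq_mul]
    have e : ∀ i, w i * ((Z i j : ℝ) + d j) = w i * (Z i j : ℝ) + w i * d j := fun i => by ring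
    rw [Finset.sum_congr rfl fun i _ => e i, Finset.sum_add_distrib, ← Finset.sum_mul, hw1]
    simp [hddef]
  rw [hy]
  apply (convex_convexHull ℝ _).sum_mem (fun i _ => hw0 i) hw1
  intro i _
  exact cube A b hA Finset.univ.card Finset.univ le_rfl d hd0 (fun j _ => Finset.mem_univ j)
    (Z i) (fun i' => hg i i')

lemma mainGlue (hA : ∀ i j, 0 ≤ A i j) (a c : Fin n → ℝ)
    (ha0 : ∀ j, 0 ≤ a j) (ha1 : ∀ j, a j ≤ 1) (hc0 : ∀ j, 0 ≤ c j) (hc1 : ∀ j, c j ≤ 1)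
    (y : Fin n → ℝ) (hAy : 5/2 ≤ ∑ j, a j * y j) (hCy : 5/2 ≤ ∑ j, c j * y j)
    (hy0 : ∀ j, 0 ≤ y j)
    (htrans : ∀ z : Fin n → ℕ, 1 ≤ ∑ j, a j * (z j : ℝ) → 1 ≤ ∑ j, c j * (z j : ℝ) →
      ∀ i, (b i : ℝ) ≤ ∑ j, (A i j : ℝ) * (z j : ℝ)) :
    y ∈ convexHull ℝ (intPts A b) := by
  obtain ⟨N', w, Z, hw0, hw1, hZa, hZc, hmarg⟩ :=
    core2 a c ha0 ha1 hc0 hc1 Finset.univ.card Finset.univ le_rfl y hy0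
      (fun j _ => Finset.mem_univ j) hAy hCy
  exact domsum A b hA N' w Z hw0 hw1 (fun i i' => htrans (Z i) (hZa i) (hZc i) i') y hmarg

lemma rowNorm (i : Fin 2) (g : Fin n → ℝ) :
    ∑ j, ((A i j : ℝ) / (b i : ℝ)) * g j = (∑ j, (A i j : ℝ) * g j) / (b i : ℝ) := by
  rw [Finset.sum_div]
  exact Finset.sum_congr rfl fun j _ => by ring

end TwoRowCoveringAux

/-- A covering polyhedron with exactly two non-trivial constraints and
rational data (`0 ≤ A_{ij}`, `0 ≤ b_i`, `A_{ij} ≤ b_i`) satisfies `P ⊆ (1/2.5) · P^I`, where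
`P^I = conv(P ∩ ℤⁿ)`. -/
theorem twoRowCovering_subset_smul_integerHull {n : ℕ} (hn : 0 < n)
    (A : Matrix (Fin 2) (Fin n) ℚ) (b : Fin 2 → ℚ)
    (hA : ∀ i j, 0 ≤ A i j) (hb : ∀ i, 0 ≤ b i) (hAb : ∀ i j, A i j ≤ b i) :
    twoRowCoverPoly A b ⊆
      (1 / 2.5 : ℝ) • convexHull ℝ {x ∈ twoRowCoverPoly A b | ∀ j, ∃ z : ℤ, x j = (z : ℝ)} := by
  intro x hx
  obtain ⟨hx0, hx2⟩ := hx
  set y : Fin n → ℝ := fun j => (5/2 : ℝ) * x j with hydef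
  have hy0 : ∀ j, 0 ≤ y j := fun j => by
    have := hx0 j; simp only [hydef]; positivity
  have hyx : (1 / 2.5 : ℝ) • y = x := by
    funext j
    simp only [Pi.smul_apply, hydef, smul_eq_mul]
    norm_num
    ring
  -- it suffices to show y ∈ convexHull of integer points
  suffices hmem : y ∈ convexHull ℝ (intPts A b) by
    exact Set.mem_smul_set.mpr ⟨y, hmem, hyx⟩
  -- facts for active rows
  have hrow : ∀ i : Fin 2, (0:ℝ) < (b i : ℝ) →
      (∀ j, 0 ≤ (A i j : ℝ) / (b i : ℝ)) ∧ (∀ j, (A i j : ℝ) / (b i : ℝ) ≤ 1) ∧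
      (5/2 ≤ ∑ j, ((A i j : ℝ) / (b i : ℝ)) * y j) ∧
      (∀ z : Fin n → ℕ, 1 ≤ ∑ j, ((A i j : ℝ) / (b i : ℝ)) * (z j : ℝ) →
        (b i : ℝ) ≤ ∑ j, (A i j : ℝ) * (z j : ℝ)) := by
    intro i hbi
    refine ⟨fun j => div_nonneg (by exact_mod_cast hA i j) hbi.le,
      fun j => (div_le_one hbi).mpr (by exact_mod_cast hAb i j), ?_, ?_⟩
    · rw [rowNorm A b i y, le_div_iff₀ hbi]
      have e : ∑ j, (A i j : ℝ) * y j = (5/2) * ∑ j, (A i j : ℝ) * x j := by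
        rw [Finset.mul_sum]
        exact Finset.sum_congr rfl fun j _ => by simp only [hydef]; ring
      rw [e]
      have := hx2 i
      nlinarith
    · intro z hz
      rw [rowNorm A b i, le_div_iff₀ hbi] at hz
      linarith
  have hzero : ∀ i : Fin 2, (b i : ℝ) = 0 → ∀ z : Fin n → ℕ,
      (b i : ℝ) ≤ ∑ j, (A i j : ℝ) * (z j : ℝ) := by
    intro i hbi z
    rw [hbi]
    apply Finset.sum_nonneg
    intro j _
    have h1 : (0:ℝ) ≤ (A i j : ℝ) := by exact_mod_cast hA i j
    positivity
  rcases eq_or_lt_of_le (hb 0) with hb0 | hb0 <;> rcases eq_or_lt_of_le (hb 1) with hb1 | hb1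
  · -- both zero : use the origin
    have h0 : (fun j => ((0 : Fin n → ℕ) j : ℝ) + y j) ∈ convexHull ℝ (intPts A b) := by
      apply cube A b hA Finset.univ.card Finset.univ le_rfl y hy0 (fun j _ => Finset.mem_univ j)
      intro i
      fin_cases i
      · exact hzero 0 (by exact_mod_cast hb0.symm) 0
      · exact hzero 1 (by exact_mod_cast hb1.symm) 0
    have e : (fun j => ((0 : Fin n → ℕ) j : ℝ) + y j) = y := by
      funext j; simp
    rwa [e] at h0
  · -- b0 = 0 < b1
    have hb1' : (0:ℝ) < (b 1 : ℝ) := by exact_mod_cast hb1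
    obtain ⟨h1, h2, h3, h4⟩ := hrow 1 hb1'
    apply mainGlue A b hA _ _ h1 h2 h1 h2 y h3 h3 hy0
    intro z hza hzc i
    fin_cases i
    · exact hzero 0 (by exact_mod_cast hb0.symm) z
    · exact h4 z hza
  · -- b1 = 0 < b0
    have hb0' : (0:ℝ) < (b 0 : ℝ) := by exact_mod_cast hb0
    obtain ⟨h1, h2, h3, h4⟩ := hrow 0 hb0'
    apply mainGlue A b hA _ _ h1 h2 h1 h2 y h3 h3 hy0
    intro z hza hzc i
    fin_cases i
    · exact h4 z hza
    · exact hzero 1 (by exact_mod_cast hb1.symm) z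
  · -- both positive
    have hb0' : (0:ℝ) < (b 0 : ℝ) := by exact_mod_cast hb0
    have hb1' : (0:ℝ) < (b 1 : ℝ) := by exact_mod_cast hb1
    obtain ⟨h1, h2, h3, h4⟩ := hrow 0 hb0'
    obtain ⟨h1', h2', h3', h4'⟩ := hrow 1 hb1'
    apply mainGlue A b hA _ _ h1 h2 h1' h2' y h3 h3' hy0
    intro z hza hzc i
    fin_cases i
    · exact h4 z hza
    · exact h4' z hzc
end

section
/- Let M ≥ 2 be an integer and let T := {(x₁,x₂) ∈ ℤ² : x₁ ≥ 0, x₂ ≥ 0, x₁ − M(M−1)x₂ ≤ 1, x₁ ≤ M+1}. Then the maximum of x₁ − (M−1)x₂ over T equals 2, attained at (M+1, 1). -/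
/-- For an integer `M ≥ 2`, the maximum of `x₁ − (M−1)x₂` over the integer
points of `{x ∈ ℝ²_+ : x₁ − M(M−1)x₂ ≤ 1, x₁ ≤ M+1}` equals `2`, attained at `(M+1, 1)`. -/
theorem signPattern_example_ip_value (M : ℤ) (hM : 2 ≤ M) :
    IsGreatest {v : ℤ | ∃ x₁ x₂ : ℤ, 0 ≤ x₁ ∧ 0 ≤ x₂ ∧
        x₁ - M * (M - 1) * x₂ ≤ 1 ∧ x₁ ≤ M + 1 ∧ v = x₁ - (M - 1) * x₂} 2 ∧
      (0 ≤ M + 1 ∧ 0 ≤ (1 : ℤ) ∧ (M + 1) - M * (M - 1) * 1 ≤ 1 ∧ M + 1 ≤ M + 1 ∧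
        (M + 1) - (M - 1) * 1 = 2) := by
  refine ⟨⟨⟨M + 1, 1, by linarith, by norm_num, by nlinarith, le_refl _, by ring⟩, ?_⟩,
    by linarith, by norm_num, by nlinarith, le_refl _, by ring⟩
  rintro v ⟨x₁, x₂, h0, h1, h2, h3, rfl⟩
  rcases eq_or_lt_of_le h1 with h | h
  · subst h; simp at h2 ⊢; linarith
  · nlinarith [mul_nonneg (by linarith : (0:ℤ) ≤ M - 1) (by linarith : (0:ℤ) ≤ x₂ - 1)]
end

section
/- Let M ≥ 2 be an even integer and let T := {(x₁,x₂,x₃,x₄) ∈ ℤ⁴_+ : x₁ − Mx₂ − Mx₃ ≤ 1, x₁ − Mx₂ − Mx₄ ≤ 1, x₁ − Mx₃ − Mx₄ ≤ 1, x₁ ≤ M+1}. Then the maximum of x₁ − (M/2)x₂ − (M/2)x₃ − (M/2)x₄ over T equals 1, attained at (1,0,0,0). -/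
/-- For an even integer `M = 2K ≥ 2`, the maximum of
`x₁ − (M/2)x₂ − (M/2)x₃ − (M/2)x₄` over the integer points of the sign-pattern polyhedron
`{x ∈ ℝ⁴_+ : x₁ − Mx₂ − Mx₃ ≤ 1, x₁ − Mx₂ − Mx₄ ≤ 1, x₁ − Mx₃ − Mx₄ ≤ 1, x₁ ≤ M+1}`
equals `1`, attained at `(1,0,0,0)`. -/
theorem signPattern4_example_ip_value (M K : ℤ) (hM : 2 ≤ M) (hMK : M = 2 * K) :
    IsGreatest {v : ℤ | ∃ x₁ x₂ x₃ x₄ : ℤ, 0 ≤ x₁ ∧ 0 ≤ x₂ ∧ 0 ≤ x₃ ∧ 0 ≤ x₄ ∧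
        x₁ - M * x₂ - M * x₃ ≤ 1 ∧ x₁ - M * x₂ - M * x₄ ≤ 1 ∧ x₁ - M * x₃ - M * x₄ ≤ 1 ∧
        x₁ ≤ M + 1 ∧ v = x₁ - K * x₂ - K * x₃ - K * x₄} 1 ∧
      ((1 : ℤ) - M * 0 - M * 0 ≤ 1 ∧ (1 : ℤ) - M * 0 - M * 0 ≤ 1 ∧
        (1 : ℤ) - M * 0 - M * 0 ≤ 1 ∧ (1 : ℤ) ≤ M + 1 ∧
        (1 : ℤ) - K * 0 - K * 0 - K * 0 = 1) := by
  have hK : 1 ≤ K := by omega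
  refine ⟨⟨⟨1, 0, 0, 0, by norm_num, by norm_num, by norm_num, by norm_num,
      by ring_nf; linarith, by ring_nf; linarith, by ring_nf; linarith, by linarith, by ring⟩, ?_⟩,
    by constructor <;> [linarith; constructor <;> [linarith; exact ⟨by linarith, by linarith, by ring⟩]]⟩
  rintro v ⟨x₁, x₂, x₃, x₄, h1, h2, h3, h4, c1, c2, c3, c4, rfl⟩
  by_cases hs : 2 ≤ x₂ + x₃ + x₄
  · have : 2 * K ≤ K * (x₂ + x₃ + x₄) := by nlinarith
    nlinarith
  · have htwo : (x₂ = 0 ∧ x₃ = 0) ∨ (x₂ = 0 ∧ x₄ = 0) ∨ (x₃ = 0 ∧ x₄ = 0) := by omega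
    rcases htwo with ⟨rfl, rfl⟩ | ⟨rfl, rfl⟩ | ⟨rfl, rfl⟩
    · have : 0 ≤ K * x₄ := mul_nonneg (by linarith) h4
      nlinarith
    · have : 0 ≤ K * x₃ := mul_nonneg (by linarith) h3
      nlinarith
    · have : 0 ≤ K * x₂ := mul_nonneg (by linarith) h2
      nlinarith
end

section
/- Let M ≥ 2 be an even integer and let P := {(x₁,x₂,x₃,x₄) ∈ ℝ⁴_+ : x₁ − Mx₂ − Mx₃ ≤ 1, x₁ − Mx₂ − Mx₄ ≤ 1, x₁ − Mx₃ − Mx₄ ≤ 1, x₁ ≤ M+1}. Then the supremum of x₁ − (M/2)x₂ − (M/2)x₃ − (M/2)x₄ over P equals M/4 + 1, attained at the point (M+1, 1/2, 1/2, 1/2). -/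
/-- For an even integer `M ≥ 2`, the supremum of
`x₁ − (M/2)x₂ − (M/2)x₃ − (M/2)x₄` over the LP relaxation
`{x ∈ ℝ⁴_+ : x₁ − Mx₂ − Mx₃ ≤ 1, x₁ − Mx₂ − Mx₄ ≤ 1, x₁ − Mx₃ − Mx₄ ≤ 1, x₁ ≤ M+1}`
equals `M/4 + 1`, attained at the point `(M+1, 1/2, 1/2, 1/2)`. -/
theorem signPattern4_example_lp_value (M : ℤ) (hM : 2 ≤ M) (hMeven : Even M) :
    IsGreatest {v : ℝ | ∃ x₁ x₂ x₃ x₄ : ℝ, 0 ≤ x₁ ∧ 0 ≤ x₂ ∧ 0 ≤ x₃ ∧ 0 ≤ x₄ ∧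
        x₁ - (M : ℝ) * x₂ - (M : ℝ) * x₃ ≤ 1 ∧ x₁ - (M : ℝ) * x₂ - (M : ℝ) * x₄ ≤ 1 ∧
        x₁ - (M : ℝ) * x₃ - (M : ℝ) * x₄ ≤ 1 ∧ x₁ ≤ (M : ℝ) + 1 ∧
        v = x₁ - ((M : ℝ) / 2) * x₂ - ((M : ℝ) / 2) * x₃ - ((M : ℝ) / 2) * x₄}
      ((M : ℝ) / 4 + 1) ∧
      (((M : ℝ) + 1) - (M : ℝ) * (1 / 2) - (M : ℝ) * (1 / 2) ≤ 1 ∧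
        (M : ℝ) + 1 ≤ (M : ℝ) + 1 ∧
        ((M : ℝ) + 1) - ((M : ℝ) / 2) * (1 / 2) - ((M : ℝ) / 2) * (1 / 2) -
          ((M : ℝ) / 2) * (1 / 2) = (M : ℝ) / 4 + 1) := by
  have hM' : (2 : ℝ) ≤ (M : ℝ) := by exact_mod_cast hM
  refine ⟨⟨⟨(M : ℝ) + 1, 1/2, 1/2, 1/2, by linarith, by norm_num, by norm_num, by norm_num,
      by linarith, by linarith, by linarith, le_refl _, by ring⟩, ?_⟩, by linarith, le_refl _,
      by ring⟩
  rintro v ⟨x₁, x₂, x₃, x₄, h1, h2, h3, h4, h5, h6, h7, h8, rfl⟩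
  linarith
end

section
/- Let M ≥ 2 be an even integer and let S := {(x₁,x₂,x₃,x₄) ∈ ℤ⁴_+ : 2x₁ − 2Mx₂ − Mx₃ − Mx₄ ≤ 2, 2x₁ − Mx₃ − Mx₄ ≤ M+2}. Then the maximum of x₁ − (M/2)x₂ − (M/2)x₃ − (M/2)x₄ over S equals 1. -/
/-- For an even integer `M = 2K ≥ 2`, the maximum of
`x₁ − (M/2)x₂ − (M/2)x₃ − (M/2)x₄` over the nonnegative integer points satisfying the two
aggregated constraints `2x₁ − 2Mx₂ − Mx₃ − Mx₄ ≤ 2` and `2x₁ − Mx₃ − Mx₄ ≤ M+2`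
equals `1`. -/
theorem signPattern4_aggregated_ip_value (M K : ℤ) (hM : 2 ≤ M) (hMK : M = 2 * K) :
    IsGreatest {v : ℤ | ∃ x₁ x₂ x₃ x₄ : ℤ, 0 ≤ x₁ ∧ 0 ≤ x₂ ∧ 0 ≤ x₃ ∧ 0 ≤ x₄ ∧
        2 * x₁ - 2 * M * x₂ - M * x₃ - M * x₄ ≤ 2 ∧
        2 * x₁ - M * x₃ - M * x₄ ≤ M + 2 ∧
        v = x₁ - K * x₂ - K * x₃ - K * x₄} 1 := by
  subst hMK
  have hK : 1 ≤ K := by linarith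
  constructor
  · exact ⟨1, 0, 0, 0, by norm_num, by norm_num, by norm_num, by norm_num,
      by ring_nf; linarith, by linarith, by ring⟩
  · rintro v ⟨x₁, x₂, x₃, x₄, h1, h2, h3, h4, c1, c2, hv⟩
    rcases eq_or_lt_of_le h2 with h | h
    · subst hv
      rw [← h] at c1 ⊢
      nlinarith
    · subst hv
      nlinarith [mul_nonneg (by linarith : (0:ℤ) ≤ K - 1) (by linarith : (0:ℤ) ≤ x₂ - 1),
        mul_nonneg (le_of_lt (by linarith : (0:ℤ) < K)) h3,
        mul_nonneg (le_of_lt (by linarith : (0:ℤ) < K)) h4]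
end
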